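/- Let X be a d-dimensional simplicial complex that is a γ one-sided local spectral expander. For all i ≤ d and α ∈ (1/i, 1), the down-up random walk on X(i) that goes down to a uniformly random αi-subset and back up has second largest singular value at most α + poly(i)·γ. -/

import Mathlib

set_option linter.unusedSectionVars false
open scoped Classical

/-- The number of top faces of the complex containing a given face `s`. -/
def nFaces {ι : Type} [DecidableEq ι] (Ω : Finset (Finset ι)) (s : Finset ι) : ℕ :=
  (Ω.filter fun D => s ⊆ D).card

/-- The set `X(i)` of all `i`-element subsets of the vertex set. -/
noncomputable def levelSet (ι : Type) [Fintype ι] [DecidableEq ι] (i : ℕ) :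
    Finset (Finset ι) :=
  Finset.univ.filter fun s => s.card = i

/-- The measure `μ_i` on `X(i)` of a `d`-dimensional complex with top faces `Ω`:
sample a uniform top face and a uniform `i`-subset of it. -/
noncomputable def μlev {ι : Type} [DecidableEq ι] (Ω : Finset (Finset ι))
    (d i : ℕ) (s : Finset ι) : ℝ :=
  (nFaces Ω s : ℝ) / ((Ω.card : ℝ) * (Nat.choose d i : ℝ))

/-- The (unnormalized) edge weight of the 1-skeleton of the link of `I`:
the number of top faces containing `I ∪ {u, v}`. -/
noncomputable def linkCount {ι : Type} [DecidableEq ι] (Ω : Finset (Finset ι))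
    (I : Finset ι) (u v : ι) : ℕ :=
  if u ≠ v ∧ u ∉ I ∧ v ∉ I then (Ω.filter fun D => I ∪ {u, v} ⊆ D).card else 0

/-- The (unnormalized) degree of a vertex in the 1-skeleton of the link of `I`. -/
noncomputable def linkDeg {ι : Type} [Fintype ι] [DecidableEq ι]
    (Ω : Finset (Finset ι)) (I : Finset ι) (u : ι) : ℕ :=
  ∑ v, linkCount Ω I u v

/-- The joint distribution on `X(i) × X(i)` of the down-up walk that goes from
`s ∼ μ_i` down to a uniformly random `k`-subset `r ⊆ s` and back up to
`t ∼ μ_i( · | t ⊇ r)`. -/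
noncomputable def downUp {ι : Type} [Fintype ι] [DecidableEq ι]
    (Ω : Finset (Finset ι)) (d i k : ℕ) (s t : Finset ι) : ℝ :=
  ∑ r ∈ Finset.univ.filter (fun r : Finset ι => r.card = k ∧ r ⊆ s ∧ r ⊆ t),
    μlev Ω d i s * μlev Ω d i t /
      ((Nat.choose i k : ℝ) *
        ∑ t' ∈ levelSet ι i, (if r ⊆ t' then μlev Ω d i t' else 0))

section Aux
variable {ι : Type} [Fintype ι] [DecidableEq ι] (Ω : Finset (Finset ι))

lemma nFaces_mono {s t : Finset ι} (h : s ⊆ t) : nFaces Ω t ≤ nFaces Ω s := by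
  apply Finset.card_le_card
  intro D hD
  simp only [Finset.mem_filter] at *
  exact ⟨hD.1, h.trans hD.2⟩

lemma nFaces_eq_zero {s t : Finset ι} (h : s ⊆ t) (hs : nFaces Ω s = 0) :
    nFaces Ω t = 0 :=
  Nat.le_zero.mp (hs ▸ nFaces_mono Ω h)

lemma mem_levelSet {s : Finset ι} {m : ℕ} : s ∈ levelSet ι m ↔ s.card = m := by
  simp [levelSet]

/-- number of `m`-sets between `r` and `D`. -/
lemma count_between {r D : Finset ι} (hr : r ⊆ D) {m : ℕ} (hm : r.card ≤ m) :
    ((levelSet ι m).filter (fun s => r ⊆ s ∧ s ⊆ D)).card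
      = (D.card - r.card).choose (m - r.card) := by
  rw [← Finset.card_sdiff_of_subset hr, ← Finset.card_powersetCard]
  apply Finset.card_bij' (fun s _ => s \ r) (fun u _ => r ∪ u)
  · intro s hs
    simp only [Finset.mem_filter, mem_levelSet] at hs
    rw [Finset.mem_powersetCard]
    refine ⟨fun x hx => ?_, by rw [Finset.card_sdiff_of_subset hs.2.1, hs.1]⟩
    rw [Finset.mem_sdiff] at hx ⊢
    exact ⟨hs.2.2 hx.1, hx.2⟩
  · intro u hu
    rw [Finset.mem_powersetCard] at hu
    have hdisj : Disjoint r u := Finset.disjoint_of_subset_right hu.1 Finset.disjoint_sdiff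
    simp only [Finset.mem_filter, mem_levelSet]
    refine ⟨?_, Finset.subset_union_left, Finset.union_subset hr (hu.1.trans Finset.sdiff_subset)⟩
    rw [Finset.card_union_of_disjoint hdisj, hu.2]
    omega
  · intro s hs
    simp only [Finset.mem_filter, mem_levelSet] at hs
    exact Finset.union_sdiff_of_subset hs.2.1
  · intro u hu
    rw [Finset.mem_powersetCard] at hu
    exact Finset.union_sdiff_cancel_left
      (Finset.disjoint_of_subset_right hu.1 Finset.disjoint_sdiff)

variable (d : ℕ)

/-- Generic double counting: sum of `nFaces` over `m`-supersets of `r`. -/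
lemma sum_nFaces_level (hcard : ∀ D ∈ Ω, D.card = d) (r : Finset ι) (m : ℕ)
    (hrm : r.card ≤ m) :
    ∑ s ∈ levelSet ι m, (if r ⊆ s then nFaces Ω s else 0)
      = (d - r.card).choose (m - r.card) * nFaces Ω r := by
  have : ∀ s, (if r ⊆ s then nFaces Ω s else 0)
      = ∑ D ∈ Ω, if r ⊆ s ∧ s ⊆ D then 1 else 0 := by
    intro s
    by_cases h : r ⊆ s
    · simp only [h, if_true, true_and, nFaces, Finset.card_filter]
    · simp [h]
  simp only [this]
  rw [Finset.sum_comm]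
  have : ∀ D ∈ Ω, (∑ s ∈ levelSet ι m, if r ⊆ s ∧ s ⊆ D then 1 else 0)
      = if r ⊆ D then (d - r.card).choose (m - r.card) else 0 := by
    intro D hD
    by_cases h : r ⊆ D
    · rw [if_pos h, ← hcard D hD, ← count_between h hrm, Finset.card_filter]
    · rw [if_neg h]
      apply Finset.sum_eq_zero
      intro s _
      rw [if_neg]
      rintro ⟨h1, h2⟩
      exact h (h1.trans h2)
  rw [Finset.sum_congr rfl this]
  rw [Finset.sum_ite, Finset.sum_const, Finset.sum_const_zero, add_zero, smul_eq_mul, mul_comm]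
  rfl
end Aux

section Aux2
variable {ι : Type} [Fintype ι] [DecidableEq ι] (Ω : Finset (Finset ι)) (d : ℕ)

lemma μlev_nonneg (i : ℕ) (s : Finset ι) : 0 ≤ μlev Ω d i s := by
  unfold μlev; positivity

lemma wpos (hΩ : Ω.Nonempty) {i : ℕ} (hid : i ≤ d) :
    0 < (Ω.card : ℝ) * (Nat.choose d i : ℝ) := by
  apply mul_pos
  · exact_mod_cast Finset.card_pos.mpr hΩ
  · exact_mod_cast Nat.choose_pos hid

lemma μlev_eq_zero_iff (hΩ : Ω.Nonempty) {i : ℕ} (hid : i ≤ d) (s : Finset ι) :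
    μlev Ω d i s = 0 ↔ nFaces Ω s = 0 := by
  unfold μlev
  rw [div_eq_zero_iff]
  constructor
  · rintro (h | h)
    · exact_mod_cast h
    · exact absurd h (ne_of_gt (wpos Ω d hΩ hid))
  · intro h; left; exact_mod_cast h

/-- Sum of `μ_i` over `i`-supersets of a `k`-set `r`. -/
lemma sum_mu (hΩ : Ω.Nonempty) (hcard : ∀ D ∈ Ω, D.card = d) {r : Finset ι} {k i : ℕ}
    (hr : r.card = k) (hki : k ≤ i) (hid : i ≤ d) :
    ∑ s ∈ levelSet ι i, (if r ⊆ s then μlev Ω d i s else 0)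
      = (i.choose k : ℝ) * μlev Ω d k r := by
  unfold μlev
  have h0 : ∀ s : Finset ι, (if r ⊆ s then
      (nFaces Ω s : ℝ) / ((Ω.card : ℝ) * (Nat.choose d i : ℝ)) else 0)
      = (if r ⊆ s then (nFaces Ω s : ℝ) else 0) / ((Ω.card : ℝ) * (Nat.choose d i : ℝ)) := by
    intro s; split
    · rfl
    · simp
  have h1 : ∑ s ∈ levelSet ι i, (if r ⊆ s then (nFaces Ω s : ℝ) else 0)
      = (((d - k).choose (i - k) * nFaces Ω r : ℕ) : ℝ) := by
    have hcast : (∑ s ∈ levelSet ι i, if r ⊆ s then ((nFaces Ω s : ℕ) : ℝ) else 0)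
        = ((∑ s ∈ levelSet ι i, if r ⊆ s then nFaces Ω s else 0 : ℕ) : ℝ) := by
      rw [Nat.cast_sum]
      apply Finset.sum_congr rfl
      intro s _; split <;> simp
    rw [hcast, sum_nFaces_level Ω d hcard r i (hr ▸ hki), hr]
  simp only [h0]
  rw [← Finset.sum_div, h1]
  have hΩpos : (0:ℝ) < (Ω.card : ℝ) := by exact_mod_cast Finset.card_pos.mpr hΩ
  have hdi : (0:ℝ) < (Nat.choose d i : ℝ) := by exact_mod_cast Nat.choose_pos hid
  have hdk : (0:ℝ) < (Nat.choose d k : ℝ) := by exact_mod_cast Nat.choose_pos (hki.trans hid)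
  have key : ((d.choose i : ℝ)) * (i.choose k) = (d.choose k) * ((d-k).choose (i-k)) := by
    exact_mod_cast Nat.choose_mul (n := d) hki
  rw [← mul_div_assoc, div_eq_div_iff (by positivity) (by positivity)]
  push_cast
  linear_combination (-((nFaces Ω r : ℝ) * (Ω.card : ℝ))) * key

/-- The multi-step down operator. -/
noncomputable def dM {ι : Type} [Fintype ι] [DecidableEq ι] (Ω : Finset (Finset ι))
    (d i k : ℕ) (f : Finset ι → ℝ) (r : Finset ι) : ℝ :=
  (∑ s ∈ levelSet ι i, if r ⊆ s then μlev Ω d i s * f s else 0) /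
    ((i.choose k : ℝ) * μlev Ω d k r)

lemma dM_num_zero (hΩ : Ω.Nonempty) {i : ℕ} (hid : i ≤ d) {r : Finset ι}
    (h : nFaces Ω r = 0) (f : Finset ι → ℝ) :
    (∑ s ∈ levelSet ι i, if r ⊆ s then μlev Ω d i s * f s else 0) = 0 := by
  apply Finset.sum_eq_zero
  intro s _
  split
  · rename_i hrs
    rw [(μlev_eq_zero_iff Ω d hΩ hid s).mpr (nFaces_eq_zero Ω hrs h), zero_mul]
  · rfl

lemma dM_zero (hΩ : Ω.Nonempty) {i k : ℕ} (hid : i ≤ d) {r : Finset ι}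
    (h : nFaces Ω r = 0) (f : Finset ι → ℝ) : dM Ω d i k f r = 0 := by
  unfold dM
  rw [dM_num_zero Ω d hΩ hid h f, zero_div]

lemma mul_dM (hΩ : Ω.Nonempty) {i k : ℕ} (hki : k ≤ i) (hid : i ≤ d) (f : Finset ι → ℝ)
    (r : Finset ι) :
    (i.choose k : ℝ) * μlev Ω d k r * dM Ω d i k f r
      = ∑ s ∈ levelSet ι i, if r ⊆ s then μlev Ω d i s * f s else 0 := by
  by_cases h : nFaces Ω r = 0
  · rw [dM_num_zero Ω d hΩ hid h f, dM_zero Ω d hΩ hid h f, mul_zero]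
  · have h1 : μlev Ω d k r ≠ 0 := fun hc =>
      h ((μlev_eq_zero_iff Ω d hΩ (hki.trans hid) r).mp hc)
    have h2 : (i.choose k : ℝ) ≠ 0 := by
      have := Nat.choose_pos hki; positivity
    unfold dM
    field_simp

/-- The down operator preserves the mean. -/
lemma sum_mu_dM (hΩ : Ω.Nonempty) (hcard : ∀ D ∈ Ω, D.card = d) {i k : ℕ}
    (hki : k ≤ i) (hid : i ≤ d) (f : Finset ι → ℝ) :
    ∑ r ∈ levelSet ι k, μlev Ω d k r * dM Ω d i k f r
      = ∑ s ∈ levelSet ι i, μlev Ω d i s * f s := by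
  have hc : (0:ℝ) < (i.choose k : ℝ) := by exact_mod_cast Nat.choose_pos hki
  have h1 : ∀ r ∈ levelSet ι k, μlev Ω d k r * dM Ω d i k f r
      = (∑ s ∈ levelSet ι i, if r ⊆ s then μlev Ω d i s * f s else 0) / (i.choose k : ℝ) := by
    intro r _
    rw [eq_div_iff (ne_of_gt hc), ← mul_dM Ω d hΩ hki hid f r]
    ring
  rw [Finset.sum_congr rfl h1, ← Finset.sum_div, Finset.sum_comm]
  have h2 : ∀ s ∈ levelSet ι i, (∑ r ∈ levelSet ι k, if r ⊆ s then μlev Ω d i s * f s else 0)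
      = (i.choose k : ℝ) * (μlev Ω d i s * f s) := by
    intro s hs
    rw [Finset.sum_ite, Finset.sum_const, Finset.sum_const_zero, add_zero, nsmul_eq_mul]
    congr 1
    have : (levelSet ι k).filter (fun r => r ⊆ s) = s.powersetCard k := by
      ext r
      simp only [Finset.mem_filter, mem_levelSet, Finset.mem_powersetCard]
      tauto
    rw [this, Finset.card_powersetCard, mem_levelSet.mp hs]
  rw [Finset.sum_congr rfl h2, ← Finset.mul_sum]
  field_simp
end Aux2

section Aux3
variable {ι : Type} [Fintype ι] [DecidableEq ι] (Ω : Finset (Finset ι)) (d : ℕ)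

/-- Weighted Cauchy–Schwarz with nonnegative weights. -/
lemma abs_weighted_cs {α : Type} (s : Finset α) (w f g : α → ℝ) (hw : ∀ a ∈ s, 0 ≤ w a) :
    |∑ a ∈ s, w a * f a * g a| ≤
      Real.sqrt (∑ a ∈ s, w a * f a ^ 2) * Real.sqrt (∑ a ∈ s, w a * g a ^ 2) := by
  have h1 : ∑ a ∈ s, w a * f a * g a
      = ∑ a ∈ s, (Real.sqrt (w a) * f a) * (Real.sqrt (w a) * g a) := by
    apply Finset.sum_congr rfl; intro a ha
    rw [show (Real.sqrt (w a) * f a) * (Real.sqrt (w a) * g a)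
        = (Real.sqrt (w a) * Real.sqrt (w a)) * (f a * g a) by ring,
      Real.mul_self_sqrt (hw a ha)]; ring
  have h2 := Finset.sum_mul_sq_le_sq_mul_sq s (fun a => Real.sqrt (w a) * f a)
      (fun a => Real.sqrt (w a) * g a)
  have h3 : ∀ a ∈ s, (Real.sqrt (w a) * f a) ^ 2 = w a * f a ^ 2 := by
    intro a ha; rw [mul_pow, Real.sq_sqrt (hw a ha)]
  have h4 : ∀ a ∈ s, (Real.sqrt (w a) * g a) ^ 2 = w a * g a ^ 2 := by
    intro a ha; rw [mul_pow, Real.sq_sqrt (hw a ha)]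
  rw [Finset.sum_congr rfl h3, Finset.sum_congr rfl h4] at h2
  rw [h1]
  have h5 : 0 ≤ ∑ a ∈ s, w a * f a ^ 2 :=
    Finset.sum_nonneg fun a ha => mul_nonneg (hw a ha) (sq_nonneg _)
  have h6 : 0 ≤ ∑ a ∈ s, w a * g a ^ 2 :=
    Finset.sum_nonneg fun a ha => mul_nonneg (hw a ha) (sq_nonneg _)
  rw [← Real.sqrt_mul h5]
  rw [← Real.sqrt_sq_eq_abs]
  exact Real.sqrt_le_sqrt h2

/-- The down operator is an `L²` contraction. -/
lemma dM_contract (hΩ : Ω.Nonempty) (hcard : ∀ D ∈ Ω, D.card = d) {i k : ℕ}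
    (hki : k ≤ i) (hid : i ≤ d) (f : Finset ι → ℝ) :
    ∑ r ∈ levelSet ι k, μlev Ω d k r * (dM Ω d i k f r) ^ 2
      ≤ ∑ s ∈ levelSet ι i, μlev Ω d i s * f s ^ 2 := by
  have hc : (0:ℝ) < (i.choose k : ℝ) := by exact_mod_cast Nat.choose_pos hki
  have key : ∀ r ∈ levelSet ι k, μlev Ω d k r * (dM Ω d i k f r) ^ 2
      ≤ (∑ s ∈ levelSet ι i, if r ⊆ s then μlev Ω d i s * f s ^ 2 else 0) / (i.choose k : ℝ) := by
    intro r hr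
    by_cases h : nFaces Ω r = 0
    · rw [dM_zero Ω d hΩ hid h f]
      have : (0:ℝ) ≤ ∑ s ∈ levelSet ι i, if r ⊆ s then μlev Ω d i s * f s ^ 2 else 0 := by
        apply Finset.sum_nonneg; intro s _
        split
        · exact mul_nonneg (μlev_nonneg Ω d i s) (sq_nonneg _)
        · exact le_refl _
      rw [show μlev Ω d k r * (0:ℝ)^2 = 0 by ring]
      exact div_nonneg this (le_of_lt hc)
    · have hμ : 0 < μlev Ω d k r := by
        rcases lt_or_eq_of_le (μlev_nonneg Ω d k r) with h1 | h1
        · exact h1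
        · exact absurd ((μlev_eq_zero_iff Ω d hΩ (hki.trans hid) r).mp h1.symm) h
      -- Cauchy-Schwarz
      set a : Finset ι → ℝ := fun s => if r ⊆ s then μlev Ω d i s else 0 with ha
      have hanon : ∀ s, 0 ≤ a s := by
        intro s; rw [ha]; dsimp only; split
        · exact μlev_nonneg Ω d i s
        · exact le_refl _
      have hnum : (∑ s ∈ levelSet ι i, if r ⊆ s then μlev Ω d i s * f s else 0)
          = ∑ s ∈ levelSet ι i, Real.sqrt (a s) * (Real.sqrt (a s) * f s) := by
        apply Finset.sum_congr rfl; intro s _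
        rw [show Real.sqrt (a s) * (Real.sqrt (a s) * f s)
            = (Real.sqrt (a s) * Real.sqrt (a s)) * f s by ring, Real.mul_self_sqrt (hanon s)]
        rw [ha]; dsimp only; split <;> simp
      have hCS := Finset.sum_mul_sq_le_sq_mul_sq (levelSet ι i)
        (fun s => Real.sqrt (a s)) (fun s => Real.sqrt (a s) * f s)
      simp only [Real.sq_sqrt (hanon _), mul_pow] at hCS
      have hsum_a : ∑ s ∈ levelSet ι i, a s = (i.choose k : ℝ) * μlev Ω d k r := by
        rw [ha]; exact sum_mu Ω d hΩ hcard (mem_levelSet.mp hr) hki hid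
      have haf2 : ∀ s, a s * f s ^ 2 = (if r ⊆ s then μlev Ω d i s * f s ^ 2 else 0) := by
        intro s; rw [ha]; dsimp only; split <;> simp
      simp only [haf2] at hCS
      rw [hsum_a] at hCS
      -- now hCS : num^2 ≤ (C * μ) * Σ ite (μ f²)
      rw [← hnum] at hCS
      have hdm : dM Ω d i k f r
          = (∑ s ∈ levelSet ι i, if r ⊆ s then μlev Ω d i s * f s else 0) /
            ((i.choose k : ℝ) * μlev Ω d k r) := rfl
      rw [hdm, div_pow, ← mul_div_assoc, div_le_div_iff₀ (by positivity) hc]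
      calc μlev Ω d k r * (∑ s ∈ levelSet ι i, if r ⊆ s then μlev Ω d i s * f s else 0) ^ 2
            * (i.choose k : ℝ)
          ≤ μlev Ω d k r * (((i.choose k : ℝ) * μlev Ω d k r) *
            (∑ s ∈ levelSet ι i, if r ⊆ s then μlev Ω d i s * f s ^ 2 else 0)) * (i.choose k : ℝ) := by
            have := mul_le_mul_of_nonneg_left hCS (le_of_lt hμ)
            exact mul_le_mul_of_nonneg_right this (le_of_lt hc)
        _ = (∑ s ∈ levelSet ι i, if r ⊆ s then μlev Ω d i s * f s ^ 2 else 0) *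
            ((i.choose k : ℝ) * μlev Ω d k r) ^ 2 := by ring
  calc ∑ r ∈ levelSet ι k, μlev Ω d k r * (dM Ω d i k f r) ^ 2
      ≤ ∑ r ∈ levelSet ι k,
        (∑ s ∈ levelSet ι i, if r ⊆ s then μlev Ω d i s * f s ^ 2 else 0) / (i.choose k : ℝ) :=
        Finset.sum_le_sum key
    _ = ∑ s ∈ levelSet ι i, μlev Ω d i s * f s ^ 2 := by
        rw [← Finset.sum_div, Finset.sum_comm]
        have h2 : ∀ s ∈ levelSet ι i,
            (∑ r ∈ levelSet ι k, if r ⊆ s then μlev Ω d i s * f s ^ 2 else 0)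
            = (i.choose k : ℝ) * (μlev Ω d i s * f s ^ 2) := by
          intro s hs
          rw [Finset.sum_ite, Finset.sum_const, Finset.sum_const_zero, add_zero, nsmul_eq_mul]
          congr 1
          have : (levelSet ι k).filter (fun r => r ⊆ s) = s.powersetCard k := by
            ext r
            simp only [Finset.mem_filter, mem_levelSet, Finset.mem_powersetCard]
            tauto
          rw [this, Finset.card_powersetCard, mem_levelSet.mp hs]
        rw [Finset.sum_congr rfl h2, ← Finset.mul_sum]
        field_simp
end Aux3

section Aux4
variable {ι : Type} [Fintype ι] [DecidableEq ι] (Ω : Finset (Finset ι)) (d : ℕ)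

/-- Sum over `p`-sets containing `w`, where `w` has at least `p` elements. -/
lemma sum_superset_eq {w : Finset ι} {p : ℕ} (hp : p ≤ w.card) (F : Finset ι → ℝ) :
    ∑ s ∈ levelSet ι p, (if w ⊆ s then F s else 0)
      = if w.card = p then F w else 0 := by
  by_cases h : w.card = p
  · rw [if_pos h]
    rw [Finset.sum_eq_single w]
    · simp
    · intro s hs hsne
      rw [if_neg]
      intro hws
      exact hsne ((Finset.eq_of_subset_of_card_le hws (by rw [mem_levelSet.mp hs, h])).symm)
    · intro hw
      exact absurd (mem_levelSet.mpr h) hw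
  · rw [if_neg h]
    apply Finset.sum_eq_zero
    intro s hs
    rw [if_neg]
    intro hws
    have := Finset.card_le_card hws
    rw [mem_levelSet.mp hs] at this
    exact h (le_antisymm (le_of_not_gt (fun hc => absurd hp (not_le.mpr hc))) this ▸ rfl) 
  
/-- Sum over `p`-subsets of `w`, where `w` has at most `p` elements. -/
lemma sum_subset_eq {w : Finset ι} {p : ℕ} (hp : w.card ≤ p) (F : Finset ι → ℝ) :
    ∑ r ∈ levelSet ι p, (if r ⊆ w then F r else 0)
      = if w.card = p then F w else 0 := by
  by_cases h : w.card = p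
  · rw [if_pos h]
    rw [Finset.sum_eq_single w]
    · simp
    · intro r hr hrne
      rw [if_neg]
      intro hrw
      exact hrne (Finset.eq_of_subset_of_card_le hrw (by rw [mem_levelSet.mp hr, h]))
    · intro hw
      exact absurd (mem_levelSet.mpr h) hw
  · rw [if_neg h]
    apply Finset.sum_eq_zero
    intro r hr
    rw [if_neg]
    intro hrw
    have := Finset.card_le_card hrw
    rw [mem_levelSet.mp hr] at this
    exact h (le_antisymm hp this)

/-- Reindex a sum over `(m+1)`-supersets of an `m`-set `r` by the extra vertex. -/
lemma sum_insert_reindex {r : Finset ι} {m : ℕ} (hr : r.card = m) (F : Finset ι → ℝ) :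
    ∑ t ∈ levelSet ι (m+1), (if r ⊆ t then F t else 0)
      = ∑ u, (if u ∉ r then F (insert u r) else 0) := by
  have key : ∀ t ∈ levelSet ι (m+1), (if r ⊆ t then F t else 0)
      = ∑ u, (if (u ∉ r ∧ t = insert u r) then F t else 0) := by
    intro t ht
    by_cases h : r ⊆ t
    · rw [if_pos h]
      have hss : r ⊂ t := by
        rw [Finset.ssubset_def]
        refine ⟨h, fun hts => ?_⟩
        have := Finset.card_le_card hts
        rw [mem_levelSet.mp ht, hr] at this
        omega
      obtain ⟨a, hat, har⟩ := Finset.exists_of_ssubset hss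
      have hta : t = insert a r := by
        apply (Finset.eq_of_subset_of_card_le _ _).symm
        · intro x hx
          rcases Finset.mem_insert.mp hx with h1 | h1
          · rw [h1]; exact hat
          · exact h h1
        · rw [mem_levelSet.mp ht, Finset.card_insert_of_notMem har, hr]
      rw [Finset.sum_eq_single a]
      · rw [if_pos ⟨har, hta⟩]
      · intro u _ hune
        rw [if_neg]
        rintro ⟨hur, htu⟩
        apply hune
        have : u ∈ insert a r := by rw [← hta, htu]; exact Finset.mem_insert_self u r
        rcases Finset.mem_insert.mp this with h1 | h1
        · exact h1
        · exact absurd h1 hur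
      · intro ha; exact absurd (Finset.mem_univ a) ha
    · rw [if_neg h]
      symm; apply Finset.sum_eq_zero
      intro u _
      rw [if_neg]
      rintro ⟨hur, htu⟩
      exact h (htu ▸ Finset.subset_insert u r)
  rw [Finset.sum_congr rfl key, Finset.sum_comm]
  apply Finset.sum_congr rfl
  intro u _
  by_cases hu : u ∉ r
  · rw [if_pos hu]
    have hmem : insert u r ∈ levelSet ι (m+1) := by
      rw [mem_levelSet, Finset.card_insert_of_notMem hu, hr]
    calc ∑ t ∈ levelSet ι (m+1), (if u ∉ r ∧ t = insert u r then F t else 0)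
        = ∑ t ∈ levelSet ι (m+1), (if t = insert u r then F t else 0) := by
          apply Finset.sum_congr rfl; intro t _
          by_cases h : t = insert u r
          · rw [if_pos ⟨hu, h⟩, if_pos h]
          · rw [if_neg (fun hc => h hc.2), if_neg h]
      _ = F (insert u r) := by rw [Finset.sum_ite_eq' (levelSet ι (m+1)), if_pos hmem]
  · rw [if_neg hu]
    apply Finset.sum_eq_zero
    intro t _
    rw [if_neg (fun hc => hu hc.1)]

/-- Counting supersets inside `levelSet`: `∑_{r ∈ X(k), r ⊆ s} 1 = C(card s, k)`. -/
lemma sum_count_subsets {s : Finset ι} {k : ℕ} (c : ℝ) :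
    ∑ r ∈ levelSet ι k, (if r ⊆ s then c else 0) = (s.card.choose k : ℝ) * c := by
  rw [Finset.sum_ite, Finset.sum_const, Finset.sum_const_zero, add_zero, nsmul_eq_mul]
  congr 2
  have : (levelSet ι k).filter (fun r => r ⊆ s) = s.powersetCard k := by
    ext r
    simp only [Finset.mem_filter, mem_levelSet, Finset.mem_powersetCard]
    tauto
  rw [this, Finset.card_powersetCard]

/-- The up (averaging) operator on functions at level `j`. -/
noncomputable def aOp {ι : Type} [Fintype ι] [DecidableEq ι] (j : ℕ)
    (g : Finset ι → ℝ) (s : Finset ι) : ℝ :=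
  (∑ t ∈ levelSet ι j, if t ⊆ s then g t else 0) / ((j : ℝ) + 1)

/-- Adjointness of the one-step down and up operators. -/
lemma adj_dM_aOp (hΩ : Ω.Nonempty) {j : ℕ} (hjd : j + 1 ≤ d) (f g : Finset ι → ℝ) :
    ∑ t ∈ levelSet ι j, μlev Ω d j t * dM Ω d (j+1) j f t * g t
      = ∑ s ∈ levelSet ι (j+1), μlev Ω d (j+1) s * f s * aOp j g s := by
  have hch : ((j+1).choose j : ℝ) = (j : ℝ) + 1 := by
    rw [Nat.choose_succ_self_right]; push_cast; ring
  have h1 : ∀ t ∈ levelSet ι j, μlev Ω d j t * dM Ω d (j+1) j f t * g t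
      = (∑ s ∈ levelSet ι (j+1), if t ⊆ s then μlev Ω d (j+1) s * f s * g t else 0)
        / ((j:ℝ) + 1) := by
    intro t _
    have := mul_dM Ω d hΩ (Nat.le_succ j) hjd f t
    rw [hch] at this
    have h2 : (∑ s ∈ levelSet ι (j+1), if t ⊆ s then μlev Ω d (j+1) s * f s * g t else 0)
        = (∑ s ∈ levelSet ι (j+1), if t ⊆ s then μlev Ω d (j+1) s * f s else 0) * g t := by
      rw [Finset.sum_mul]
      apply Finset.sum_congr rfl; intro s _
      split <;> simp
    rw [h2, ← this]
    have hj1 : ((j:ℝ)+1) ≠ 0 := by positivity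
    field_simp
  rw [Finset.sum_congr rfl h1, ← Finset.sum_div, Finset.sum_comm, Finset.sum_div]
  apply Finset.sum_congr rfl
  intro s _
  unfold aOp
  rw [show μlev Ω d (j+1) s * f s * ((∑ t ∈ levelSet ι j, if t ⊆ s then g t else 0) / ((j:ℝ)+1))
      = (∑ t ∈ levelSet ι j, μlev Ω d (j+1) s * f s * (if t ⊆ s then g t else 0)) / ((j:ℝ)+1) by
    rw [← Finset.mul_sum]; ring]
  congr 1
  apply Finset.sum_congr rfl
  intro t _
  split <;> ring

/-- Counting sets between `r` and `s` with a constant summand. -/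
lemma sum_between_count {r s : Finset ι} {p : ℕ} (hrp : r.card ≤ p) (c : ℝ) :
    ∑ t ∈ levelSet ι p, (if r ⊆ t ∧ t ⊆ s then c else 0)
      = (if r ⊆ s then (((s.card - r.card).choose (p - r.card) : ℕ) : ℝ) else 0) * c := by
  rw [Finset.sum_ite, Finset.sum_const, Finset.sum_const_zero, add_zero, nsmul_eq_mul]
  by_cases hrs : r ⊆ s
  · rw [if_pos hrs, count_between hrs hrp]
  · rw [if_neg hrs]
    have : (levelSet ι p).filter (fun t => r ⊆ t ∧ t ⊆ s) = ∅ := by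
      apply Finset.filter_false_of_mem
      rintro t _ ⟨h1, h2⟩
      exact hrs (h1.trans h2)
    rw [this]
    simp

/-- Composition: the multi-step down operator factors through one more level. -/
lemma dM_comp (hΩ : Ω.Nonempty) (hcard : ∀ D ∈ Ω, D.card = d) {i k : ℕ}
    (hk1 : k + 1 ≤ i) (hid : i ≤ d) (f : Finset ι → ℝ) (r : Finset ι)
    (hr : r ∈ levelSet ι k) :
    dM Ω d i k f r = dM Ω d (k+1) k (dM Ω d i (k+1) f) r := by
  by_cases h : nFaces Ω r = 0
  · rw [dM_zero Ω d hΩ hid h, dM_zero Ω d hΩ (le_trans hk1 hid) h]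
  · have hμ : 0 < μlev Ω d k r := by
      rcases lt_or_eq_of_le (μlev_nonneg Ω d k r) with h1 | h1
      · exact h1
      · exact absurd ((μlev_eq_zero_iff Ω d hΩ (le_trans (Nat.le_succ k)
          (le_trans hk1 hid)) r).mp h1.symm) h
    have hc1 : (0:ℝ) < (i.choose (k+1) : ℝ) := by exact_mod_cast Nat.choose_pos hk1
    have hc0 : (0:ℝ) < (i.choose k : ℝ) := by
      exact_mod_cast Nat.choose_pos (le_trans (Nat.le_succ k) hk1)
    have hik : (0:ℝ) < ((i - k : ℕ) : ℝ) := by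
      have : 0 < i - k := by omega
      exact_mod_cast this
    have hNum : (∑ t ∈ levelSet ι (k+1), if r ⊆ t then
        μlev Ω d (k+1) t * dM Ω d i (k+1) f t else 0)
        = (∑ s ∈ levelSet ι i, if r ⊆ s then μlev Ω d i s * f s else 0)
          * ((i - k : ℕ) : ℝ) / (i.choose (k+1) : ℝ) := by
      have hper : ∀ t ∈ levelSet ι (k+1), (if r ⊆ t then
          μlev Ω d (k+1) t * dM Ω d i (k+1) f t else 0)
          = (∑ s ∈ levelSet ι i, if r ⊆ t ∧ t ⊆ s then μlev Ω d i s * f s else 0)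
            / (i.choose (k+1) : ℝ) := by
        intro t _
        by_cases hrt : r ⊆ t
        · rw [if_pos hrt]
          have hmul := mul_dM Ω d hΩ hk1 hid f t
          rw [eq_div_iff (ne_of_gt hc1)]
          calc μlev Ω d (k+1) t * dM Ω d i (k+1) f t * (i.choose (k+1) : ℝ)
              = (i.choose (k+1) : ℝ) * μlev Ω d (k+1) t * dM Ω d i (k+1) f t := by ring
            _ = ∑ s ∈ levelSet ι i, if t ⊆ s then μlev Ω d i s * f s else 0 := hmul
            _ = ∑ s ∈ levelSet ι i, if r ⊆ t ∧ t ⊆ s then μlev Ω d i s * f s else 0 := by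
                apply Finset.sum_congr rfl; intro s _
                by_cases hts : t ⊆ s
                · rw [if_pos hts, if_pos ⟨hrt, hts⟩]
                · rw [if_neg hts, if_neg (fun hc => hts hc.2)]
        · rw [if_neg hrt]
          symm
          rw [div_eq_zero_iff]; left
          apply Finset.sum_eq_zero; intro s _
          rw [if_neg (fun hc => hrt hc.1)]
      rw [Finset.sum_congr rfl hper, ← Finset.sum_div, Finset.sum_comm]
      congr 1
      rw [Finset.sum_mul]
      apply Finset.sum_congr rfl
      intro s hs
      rw [sum_between_count (by rw [mem_levelSet.mp hr]; omega)]
      rw [mem_levelSet.mp hs, mem_levelSet.mp hr]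
      have : (k + 1 - k) = 1 := by omega
      rw [this, Nat.choose_one_right]
      by_cases hrs : r ⊆ s
      · rw [if_pos hrs, if_pos hrs]; ring
      · rw [if_neg hrs, if_neg hrs]; ring
    have hch : ((k+1).choose k : ℝ) = (k : ℝ) + 1 := by
      rw [Nat.choose_succ_self_right]; push_cast; ring
    have hkey : (i.choose (k+1) : ℝ) * ((k:ℝ)+1) = (i.choose k : ℝ) * ((i - k : ℕ) : ℝ) := by
      exact_mod_cast Nat.choose_succ_right_eq i k
    show _ = (∑ t ∈ levelSet ι (k+1), if r ⊆ t then
        μlev Ω d (k+1) t * dM Ω d i (k+1) f t else 0) / (((k+1).choose k : ℝ) * μlev Ω d k r)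
    rw [hNum, hch]
    unfold dM
    rw [div_div]
    rw [div_eq_div_iff (by positivity) (by positivity)]
    linear_combination ((∑ s ∈ levelSet ι i, if r ⊆ s then μlev Ω d i s * f s else 0)
      * μlev Ω d k r) * hkey
end Aux4

section Aux5
variable {ι : Type} [Fintype ι] [DecidableEq ι] (Ω : Finset (Finset ι)) (d : ℕ)

lemma linkCount_symm (I : Finset ι) (u v : ι) :
    linkCount Ω I u v = linkCount Ω I v u := by
  unfold linkCount
  by_cases h : u ≠ v ∧ u ∉ I ∧ v ∉ I
  · rw [if_pos h, if_pos ⟨h.1.symm, h.2.2, h.2.1⟩, Finset.pair_comm]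
  · rw [if_neg h, if_neg]
    rintro ⟨h1, h2, h3⟩
    exact h ⟨h1.symm, h3, h2⟩

lemma linkCount_eq_nFaces {I : Finset ι} {u v : ι} (h : u ≠ v ∧ u ∉ I ∧ v ∉ I) :
    linkCount Ω I u v = nFaces Ω (I ∪ {u, v}) := by
  unfold linkCount nFaces
  rw [if_pos h]

lemma linkDeg_of_mem {I : Finset ι} {u : ι} (hu : u ∈ I) : linkDeg Ω I u = 0 := by
  unfold linkDeg
  apply Finset.sum_eq_zero
  intro v _
  unfold linkCount
  rw [if_neg]
  rintro ⟨_, h2, _⟩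
  exact h2 hu

lemma linkDeg_eq (hcard : ∀ D ∈ Ω, D.card = d) {I : Finset ι} {u : ι} (hu : u ∉ I) :
    linkDeg Ω I u = (d - I.card - 1) * nFaces Ω (insert u I) := by
  unfold linkDeg
  have h1 : ∀ v : ι, linkCount Ω I u v
      = ∑ D ∈ Ω, (if u ≠ v ∧ v ∉ I ∧ I ∪ {u, v} ⊆ D then 1 else 0) := by
    intro v
    unfold linkCount
    by_cases h : u ≠ v ∧ v ∉ I
    · rw [if_pos ⟨h.1, hu, h.2⟩, Finset.card_filter]
      apply Finset.sum_congr rfl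
      intro D _
      exact if_congr (by tauto) rfl rfl
    · rw [if_neg (fun hc => h ⟨hc.1, hc.2.2⟩)]
      symm
      apply Finset.sum_eq_zero
      intro D _
      rw [if_neg (fun hc => h ⟨hc.1, hc.2.1⟩)]
  rw [Finset.sum_congr rfl (fun v _ => h1 v), Finset.sum_comm]
  have h2 : ∀ D ∈ Ω, (∑ v, if u ≠ v ∧ v ∉ I ∧ I ∪ {u, v} ⊆ D then 1 else 0)
      = if insert u I ⊆ D then d - I.card - 1 else 0 := by
    intro D hD
    by_cases hI : insert u I ⊆ D
    · rw [if_pos hI, ← Finset.card_filter]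
      have hfe : Finset.univ.filter (fun v => u ≠ v ∧ v ∉ I ∧ I ∪ {u, v} ⊆ D)
          = D \ insert u I := by
        ext v
        simp only [Finset.mem_filter, Finset.mem_univ, true_and, Finset.mem_sdiff,
          Finset.mem_insert]
        constructor
        · rintro ⟨h1', h2', h3'⟩
          refine ⟨h3' (Finset.mem_union_right _ (by simp)), ?_⟩
          rintro (hc | hc)
          · exact h1' hc.symm
          · exact h2' hc
        · rintro ⟨hvD, hv⟩
          push_neg at hv
          refine ⟨fun hc => hv.1 hc.symm, hv.2, Finset.union_subset ?_ ?_⟩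
          · exact (Finset.subset_insert u I).trans hI
          · intro x hx
            rcases Finset.mem_insert.mp hx with h' | h'
            · rw [h']; exact hI (Finset.mem_insert_self u I)
            · rw [Finset.mem_singleton.mp h']; exact hvD
      rw [hfe, Finset.card_sdiff_of_subset hI, Finset.card_insert_of_notMem hu, hcard D hD]
      omega
    · rw [if_neg hI]
      apply Finset.sum_eq_zero
      intro v _
      rw [if_neg]
      rintro ⟨h1', h2', h3'⟩
      apply hI
      intro x hx
      rcases Finset.mem_insert.mp hx with h' | h'
      · rw [h']; exact h3' (Finset.mem_union_right _ (by simp))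
      · exact h3' (Finset.mem_union_left _ h')
  rw [Finset.sum_congr rfl h2, Finset.sum_ite, Finset.sum_const, Finset.sum_const_zero,
    add_zero, smul_eq_mul]
  rw [mul_comm]
  rfl

/-- Local expansion bound with the mean built in. -/
lemma local_bound {γ : ℝ} (hγ : 0 ≤ γ)
    (hexp : ∀ I : Finset ι, (∃ D ∈ Ω, I ⊆ D) → I.card ≤ d - 2 →
      ∀ f : ι → ℝ, (∑ u, (linkDeg Ω I u : ℝ) * f u) = 0 →
        (∑ u, ∑ v, (linkCount Ω I u v : ℝ) * f u * f v) ≤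
          γ * ∑ u, (linkDeg Ω I u : ℝ) * (f u) ^ 2)
    (r : Finset ι) (hr2 : r.card ≤ d - 2) (φ : ι → ℝ) :
    ∑ u, ∑ v, (linkCount Ω r u v : ℝ) * φ u * φ v
      ≤ (∑ u, (linkDeg Ω r u : ℝ) * φ u) ^ 2 / (∑ u, (linkDeg Ω r u : ℝ))
        + γ * ∑ u, (linkDeg Ω r u : ℝ) * φ u ^ 2 := by
  set W := ∑ u, (linkDeg Ω r u : ℝ) with hWdef
  set S := ∑ u, (linkDeg Ω r u : ℝ) * φ u with hSdef
  set T := ∑ u, (linkDeg Ω r u : ℝ) * φ u ^ 2 with hTdef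
  have hdegsum : ∀ u, (linkDeg Ω r u : ℝ) = ∑ v, (linkCount Ω r u v : ℝ) := by
    intro u; unfold linkDeg; push_cast; rfl
  have hW0 : 0 ≤ W := Finset.sum_nonneg fun u _ => Nat.cast_nonneg _
  rcases eq_or_lt_of_le hW0 with hW | hW
  · -- degenerate: all degrees are zero
    have hdeg : ∀ u, (linkDeg Ω r u : ℝ) = 0 := by
      intro u
      have := (Finset.sum_eq_zero_iff_of_nonneg
        (fun u _ => (Nat.cast_nonneg (linkDeg Ω r u) : (0:ℝ) ≤ _))).mp hW.symm
      exact this u (Finset.mem_univ u)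
    have hcnt : ∀ u v, (linkCount Ω r u v : ℝ) = 0 := by
      intro u v
      have h0 : (linkDeg Ω r u : ℕ) = 0 := by exact_mod_cast hdeg u
      unfold linkDeg at h0
      have := Finset.sum_eq_zero_iff.mp h0 v (Finset.mem_univ v)
      exact_mod_cast this
    have hQ : ∑ u, ∑ v, (linkCount Ω r u v : ℝ) * φ u * φ v = 0 := by
      apply Finset.sum_eq_zero; intro u _
      apply Finset.sum_eq_zero; intro v _
      rw [hcnt u v]; ring
    have hS : S = 0 := by
      rw [hSdef]; apply Finset.sum_eq_zero; intro u _; rw [hdeg u]; ring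
    have hT : T = 0 := by
      rw [hTdef]; apply Finset.sum_eq_zero; intro u _; rw [hdeg u]; ring
    rw [hQ, hS, hT]
    simp
  · -- main case
    have hWne : W ≠ 0 := ne_of_gt hW
    have hex : ∃ D ∈ Ω, r ⊆ D := by
      have : ∃ u, (linkDeg Ω r u : ℝ) ≠ 0 := by
        by_contra hc
        push_neg at hc
        rw [hWdef] at hWne
        exact hWne (Finset.sum_eq_zero fun u _ => hc u)
      obtain ⟨u, hu⟩ := this
      have : linkDeg Ω r u ≠ 0 := fun hc => hu (by exact_mod_cast congrArg Nat.cast hc)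
      unfold linkDeg at this
      have : ∃ v, linkCount Ω r u v ≠ 0 := by
        by_contra hc
        push_neg at hc
        exact this (Finset.sum_eq_zero fun v _ => hc v)
      obtain ⟨v, hv⟩ := this
      unfold linkCount at hv
      by_cases hcond : u ≠ v ∧ u ∉ r ∧ v ∉ r
      · rw [if_pos hcond] at hv
        have : (Ω.filter fun D => r ∪ {u, v} ⊆ D).Nonempty :=
          Finset.card_pos.mp (Nat.pos_of_ne_zero hv)
        obtain ⟨D, hD⟩ := this
        rw [Finset.mem_filter] at hD
        exact ⟨D, hD.1, Finset.subset_union_left.trans hD.2⟩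
      · rw [if_neg hcond] at hv
        exact absurd rfl hv
    set c := S / W with hcdef
    have hcW : c * W = S := div_mul_cancel₀ S hWne
    have hmean : ∑ u, (linkDeg Ω r u : ℝ) * (φ u - c) = 0 := by
      have h1 : ∀ u : ι, (linkDeg Ω r u : ℝ) * (φ u - c)
          = (linkDeg Ω r u : ℝ) * φ u - c * (linkDeg Ω r u : ℝ) := fun u => by ring
      rw [Finset.sum_congr rfl (fun u _ => h1 u), Finset.sum_sub_distrib, ← Finset.mul_sum]
      rw [← hSdef, ← hWdef, hcW, sub_self]
    have hQ' := hexp r hex hr2 (fun u => φ u - c) hmean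
    have hA : ∑ u, ∑ v, (linkCount Ω r u v : ℝ) * φ v = S := by
      rw [Finset.sum_comm, hSdef]
      apply Finset.sum_congr rfl
      intro v _
      rw [← Finset.sum_mul]
      congr 1
      rw [hdegsum v]
      apply Finset.sum_congr rfl
      intro u _
      norm_cast
      exact linkCount_symm Ω r u v
    have hB : ∑ u, ∑ v, (linkCount Ω r u v : ℝ) * φ u = S := by
      rw [hSdef]
      apply Finset.sum_congr rfl
      intro u _
      rw [← Finset.sum_mul, ← hdegsum u]
    have hWW : ∑ u, ∑ v, (linkCount Ω r u v : ℝ) = W := by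
      rw [hWdef]
      exact Finset.sum_congr rfl fun u _ => (hdegsum u).symm
    have expandQ : ∑ u, ∑ v, (linkCount Ω r u v : ℝ) * (φ u - c) * (φ v - c)
        = (∑ u, ∑ v, (linkCount Ω r u v : ℝ) * φ u * φ v) - c * S - c * S + c * c * W := by
      calc ∑ u, ∑ v, (linkCount Ω r u v : ℝ) * (φ u - c) * (φ v - c)
          = ∑ u, ∑ v, ((linkCount Ω r u v : ℝ) * φ u * φ v
              - c * ((linkCount Ω r u v : ℝ) * φ v)
              - c * ((linkCount Ω r u v : ℝ) * φ u)
              + c * c * (linkCount Ω r u v : ℝ)) := by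
            apply Finset.sum_congr rfl; intro u _
            apply Finset.sum_congr rfl; intro v _
            ring
        _ = _ := by
            simp only [Finset.sum_add_distrib, Finset.sum_sub_distrib, ← Finset.mul_sum]
            rw [hA, hB, hWW]
    have expandT : ∑ u, (linkDeg Ω r u : ℝ) * (φ u - c) ^ 2
        = T - c * S - c * S + c * c * W := by
      calc ∑ u, (linkDeg Ω r u : ℝ) * (φ u - c) ^ 2
          = ∑ u, ((linkDeg Ω r u : ℝ) * φ u ^ 2 - c * ((linkDeg Ω r u : ℝ) * φ u)
              - c * ((linkDeg Ω r u : ℝ) * φ u) + c * c * (linkDeg Ω r u : ℝ)) := by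
            apply Finset.sum_congr rfl; intro u _; ring
        _ = _ := by
            simp only [Finset.sum_add_distrib, Finset.sum_sub_distrib, ← Finset.mul_sum]
            try rw [← hTdef, ← hSdef, ← hWdef]
    simp only [expandQ] at hQ'
    rw [expandT] at hQ'
    have hccW : c * c * W = c * S := by rw [mul_assoc, hcW]
    have hcS : c * S = S ^ 2 / W := by rw [hcdef]; field_simp [sq]
    have h7 : (∑ u, ∑ v, (linkCount Ω r u v : ℝ) * φ u * φ v) - c * S - c * S + c * c * W
        = (∑ u, ∑ v, (linkCount Ω r u v : ℝ) * φ u * φ v) - S ^ 2 / W := by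
      rw [hccW, hcS]; ring
    have h8 : γ * (T - c * S - c * S + c * c * W) = γ * T - γ * (S ^ 2 / W) := by
      rw [hccW, hcS]; ring
    have h9 : 0 ≤ γ * (S ^ 2 / W) := by positivity
    rw [h7, h8] at hQ'
    linarith
end Aux5

section Aux6
variable {ι : Type} [Fintype ι] [DecidableEq ι] (Ω : Finset (Finset ι)) (d : ℕ)

/-- Real-cast version of `sum_nFaces_level`. -/
lemma sum_nFaces_real (hcard : ∀ D ∈ Ω, D.card = d) (r : Finset ι) (m : ℕ)
    (hrm : r.card ≤ m) :
    ∑ s ∈ levelSet ι m, (if r ⊆ s then (nFaces Ω s : ℝ) else 0)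
      = (((d - r.card).choose (m - r.card) : ℕ) : ℝ) * (nFaces Ω r : ℝ) := by
  have hcast : (∑ s ∈ levelSet ι m, if r ⊆ s then ((nFaces Ω s : ℕ) : ℝ) else 0)
      = ((∑ s ∈ levelSet ι m, if r ⊆ s then nFaces Ω s else 0 : ℕ) : ℝ) := by
    rw [Nat.cast_sum]
    apply Finset.sum_congr rfl
    intro s _; split <;> simp
  rw [hcast, sum_nFaces_level Ω d hcard r m hrm]
  push_cast
  ring

/-- Aggregating link degrees over a fixed link. -/
lemma link_sum_eq (hcard : ∀ D ∈ Ω, D.card = d) {m : ℕ} {r : Finset ι}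
    (hr : r.card = m) (ψ : Finset ι → ℝ) :
    ∑ u, (linkDeg Ω r u : ℝ) * ψ (insert u r)
      = ((d - (m+1) : ℕ) : ℝ) *
        ∑ t ∈ levelSet ι (m+1), (if r ⊆ t then (nFaces Ω t : ℝ) * ψ t else 0) := by
  have h1 : ∀ u : ι, (linkDeg Ω r u : ℝ) * ψ (insert u r)
      = (if u ∉ r then ((d - (m+1) : ℕ) : ℝ) *
          ((nFaces Ω (insert u r) : ℝ) * ψ (insert u r)) else 0) := by
    intro u
    by_cases hu : u ∈ r
    · rw [if_neg (by simpa using hu), linkDeg_of_mem Ω hu]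
      simp
    · rw [if_pos hu, linkDeg_eq Ω d hcard hu, hr]
      have : d - m - 1 = d - (m+1) := by omega
      rw [this]
      push_cast
      ring
  rw [Finset.sum_congr rfl (fun u _ => h1 u)]
  rw [← sum_insert_reindex hr (fun t => ((d - (m+1) : ℕ) : ℝ) * ((nFaces Ω t : ℝ) * ψ t))]
  rw [Finset.mul_sum]
  apply Finset.sum_congr rfl
  intro t _
  split <;> simp

lemma choose_cast_b (hmd : m + 2 ≤ d) :
    ((d.choose (m+1) : ℕ) : ℝ) = ((d.choose m : ℕ) : ℝ) * ((d - m : ℕ) : ℝ) / ((m : ℝ) + 1) := by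
  have h := Nat.choose_succ_right_eq d m
  have h2 : ((d.choose (m+1) : ℕ) : ℝ) * ((m:ℝ)+1) = ((d.choose m : ℕ):ℝ) * ((d - m : ℕ):ℝ) := by
    exact_mod_cast h
  field_simp
  linarith [h2]

lemma choose_cast_c (hmd : m + 2 ≤ d) :
    ((d.choose (m+2) : ℕ) : ℝ)
      = ((d.choose (m+1) : ℕ) : ℝ) * ((d - (m+1) : ℕ) : ℝ) / ((m : ℝ) + 2) := by
  have h := Nat.choose_succ_right_eq d (m+1)
  have h2 : ((d.choose (m+2) : ℕ) : ℝ) * ((m:ℝ)+2)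
      = ((d.choose (m+1) : ℕ):ℝ) * ((d - (m+1) : ℕ):ℝ) := by
    exact_mod_cast h
  field_simp
  linarith [h2]

/-- The `S²/W` term aggregates to the squared one-step down operator. -/
lemma Spart_eq (hΩ : Ω.Nonempty) (hcard : ∀ D ∈ Ω, D.card = d) {m : ℕ}
    (hmd : m + 2 ≤ d) {r : Finset ι} (hr : r.card = m) (g : Finset ι → ℝ) :
    (∑ u, (linkDeg Ω r u : ℝ) * g (insert u r)) ^ 2 / (∑ u, (linkDeg Ω r u : ℝ))
      / ((Ω.card : ℝ) * (d.choose (m+2) : ℝ))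
    = ((m:ℝ)+1) * ((m:ℝ)+2) * (μlev Ω d m r * (dM Ω d (m+1) m g r) ^ 2) := by
  have hΩpos : (0:ℝ) < (Ω.card : ℝ) := by exact_mod_cast Finset.card_pos.mpr hΩ
  set N := ∑ t ∈ levelSet ι (m+1), (if r ⊆ t then (nFaces Ω t : ℝ) * g t else 0) with hN
  have hS : ∑ u, (linkDeg Ω r u : ℝ) * g (insert u r) = ((d - (m+1) : ℕ) : ℝ) * N :=
    link_sum_eq Ω d hcard hr g
  have hW : ∑ u, (linkDeg Ω r u : ℝ)
      = ((d - (m+1) : ℕ) : ℝ) * (((d - m : ℕ) : ℝ) * (nFaces Ω r : ℝ)) := by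
    have h1 : ∑ u, (linkDeg Ω r u : ℝ) = ∑ u, (linkDeg Ω r u : ℝ) * (fun _ => (1:ℝ)) (insert u r) := by
      apply Finset.sum_congr rfl; intro u _; simp
    rw [h1, link_sum_eq Ω d hcard hr (fun _ => (1:ℝ))]
    congr 1
    have h2 : ∑ t ∈ levelSet ι (m+1), (if r ⊆ t then (nFaces Ω t : ℝ) * (1:ℝ) else 0)
        = ∑ t ∈ levelSet ι (m+1), (if r ⊆ t then (nFaces Ω t : ℝ) else 0) := by
      apply Finset.sum_congr rfl; intro t _; split <;> simp
    rw [h2, sum_nFaces_real Ω d hcard r (m+1) (by omega), hr]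
    congr 2
    have : m + 1 - m = 1 := by omega
    rw [this, Nat.choose_one_right]
  by_cases hz : nFaces Ω r = 0
  · have hNz : N = 0 := by
      rw [hN]
      apply Finset.sum_eq_zero
      intro t _
      split
      · rename_i h'
        rw [nFaces_eq_zero Ω h' hz]
        simp
      · rfl
    have hμz : μlev Ω d m r = 0 :=
      (μlev_eq_zero_iff Ω d hΩ (by omega) r).mpr hz
    rw [hS, hNz, hμz]
    simp
  · have hnF : (0:ℝ) < (nFaces Ω r : ℝ) := by
      have := Nat.pos_of_ne_zero hz; exact_mod_cast this
    have he1 : (0:ℝ) < ((d - (m+1) : ℕ) : ℝ) := by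
      have : 0 < d - (m+1) := by omega
      exact_mod_cast this
    have he0 : (0:ℝ) < ((d - m : ℕ) : ℝ) := by
      have : 0 < d - m := by omega
      exact_mod_cast this
    have ha : (0:ℝ) < ((d.choose m : ℕ) : ℝ) := by
      have := Nat.choose_pos (show m ≤ d by omega); exact_mod_cast this
    have hμpos : 0 < μlev Ω d m r := by
      unfold μlev
      positivity
    have hdM : dM Ω d (m+1) m g r
        = N / ((Ω.card : ℝ) * (d.choose (m+1) : ℝ)) / (((m:ℝ)+1) * μlev Ω d m r) := by
      unfold dM
      congr 1
      · rw [hN, Finset.sum_div]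
        apply Finset.sum_congr rfl
        intro t _
        unfold μlev
        split <;> simp [div_mul_eq_mul_div]
      · congr 1
        rw [Nat.choose_succ_self_right]
        push_cast
        ring
    rw [hS, hW, hdM, choose_cast_c (d := d) hmd, choose_cast_b (d := d) hmd]
    unfold μlev
    have hm1 : ((m:ℝ)+1) ≠ 0 := by positivity
    have hm2 : ((m:ℝ)+2) ≠ 0 := by positivity
    field_simp
end Aux6

section Aux7
variable {ι : Type} [Fintype ι] [DecidableEq ι] (Ω : Finset (Finset ι)) (d : ℕ)

lemma insert_ne_insert {u v : ι} {r : Finset ι} (hu : u ∉ r) (hv : v ∉ r) (hne : v ≠ u) :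
    insert v r ≠ insert u r := by
  intro h
  have : v ∈ insert u r := h ▸ Finset.mem_insert_self v r
  rcases Finset.mem_insert.mp this with h1 | h1
  · exact hne h1
  · exact hv h1

lemma insert_union_insert (u v : ι) (r : Finset ι) :
    insert u r ∪ insert v r = r ∪ {u, v} := by
  ext x
  simp only [Finset.mem_union, Finset.mem_insert, Finset.mem_singleton]
  tauto

lemma rec_bound (hΩ : Ω.Nonempty) (hcard : ∀ D ∈ Ω, D.card = d) {γ : ℝ} (hγ : 0 ≤ γ)
    (hexp : ∀ I : Finset ι, (∃ D ∈ Ω, I ⊆ D) → I.card ≤ d - 2 →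
      ∀ f : ι → ℝ, (∑ u, (linkDeg Ω I u : ℝ) * f u) = 0 →
        (∑ u, ∑ v, (linkCount Ω I u v : ℝ) * f u * f v) ≤
          γ * ∑ u, (linkDeg Ω I u : ℝ) * (f u) ^ 2)
    (m : ℕ) (hmd : m + 2 ≤ d) (g : Finset ι → ℝ) :
    ∑ s ∈ levelSet ι (m+2), μlev Ω d (m+2) s * (aOp (m+1) g s) ^ 2
      ≤ (1/((m:ℝ)+2) + ((m:ℝ)+1)/((m:ℝ)+2) * γ) *
          (∑ t ∈ levelSet ι (m+1), μlev Ω d (m+1) t * g t ^ 2)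
        + ((m:ℝ)+1)/((m:ℝ)+2) *
          (∑ r ∈ levelSet ι m, μlev Ω d m r * (dM Ω d (m+1) m g r) ^ 2) := by
  have hΩpos : (0:ℝ) < (Ω.card : ℝ) := by exact_mod_cast Finset.card_pos.mpr hΩ
  set N1 := ∑ t ∈ levelSet ι (m+1), μlev Ω d (m+1) t * g t ^ 2 with hN1
  set D2 := ∑ r ∈ levelSet ι m, μlev Ω d m r * (dM Ω d (m+1) m g r) ^ 2 with hD2
  have hwcpos : (0:ℝ) < (Ω.card : ℝ) * (d.choose (m+2) : ℝ) := wpos Ω d hΩ hmd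
  -- Step 1: rewrite LHS
  have hLHS : ∑ s ∈ levelSet ι (m+2), μlev Ω d (m+2) s * (aOp (m+1) g s) ^ 2
      = (∑ s ∈ levelSet ι (m+2), μlev Ω d (m+2) s *
          (∑ t ∈ levelSet ι (m+1), if t ⊆ s then g t else 0) ^ 2) / ((m:ℝ)+2)^2 := by
    rw [Finset.sum_div]
    apply Finset.sum_congr rfl
    intro s _
    unfold aOp
    rw [div_pow]
    push_cast
    ring
  -- Step 2: split the square into diagonal and off-diagonal parts
  have hsplit : ∀ s : Finset ι,
      (∑ t ∈ levelSet ι (m+1), if t ⊆ s then g t else 0) ^ 2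
      = (∑ t ∈ levelSet ι (m+1), if t ⊆ s then g t * g t else 0)
        + (∑ t ∈ levelSet ι (m+1), ∑ t' ∈ levelSet ι (m+1),
            if t' ≠ t then (if t ⊆ s ∧ t' ⊆ s then g t * g t' else 0) else 0) := by
    intro s
    rw [sq, Finset.sum_mul_sum]
    have h1 : ∀ t ∈ levelSet ι (m+1), ∀ t' ∈ levelSet ι (m+1),
        (if t ⊆ s then g t else 0) * (if t' ⊆ s then g t' else 0)
        = (if t' = t then (if t ⊆ s ∧ t' ⊆ s then g t * g t' else 0) else 0)
          + (if t' ≠ t then (if t ⊆ s ∧ t' ⊆ s then g t * g t' else 0) else 0) := by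
      intro t _ t' _
      by_cases h : t' = t
      · subst h
        by_cases h2 : t' ⊆ s <;> simp [h2]
      · by_cases h2 : t ⊆ s <;> by_cases h3 : t' ⊆ s <;> simp [h, h2, h3]
    rw [Finset.sum_congr rfl (fun t ht => Finset.sum_congr rfl (fun t' ht' => h1 t ht t' ht'))]
    simp only [Finset.sum_add_distrib]
    congr 1
    apply Finset.sum_congr rfl
    intro t ht
    rw [Finset.sum_ite_eq' (levelSet ι (m+1)) t, if_pos ht]
    by_cases h2 : t ⊆ s
    · rw [if_pos ⟨h2, h2⟩, if_pos h2]
    · rw [if_neg (fun hc => h2 hc.1), if_neg h2]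
  -- names for parts
  set Diag := ∑ s ∈ levelSet ι (m+2), μlev Ω d (m+2) s *
      (∑ t ∈ levelSet ι (m+1), if t ⊆ s then g t * g t else 0) with hDiagDef
  set Off := ∑ s ∈ levelSet ι (m+2), μlev Ω d (m+2) s *
      (∑ t ∈ levelSet ι (m+1), ∑ t' ∈ levelSet ι (m+1),
        if t' ≠ t then (if t ⊆ s ∧ t' ⊆ s then g t * g t' else 0) else 0) with hOffDef
  have hmain : ∑ s ∈ levelSet ι (m+2), μlev Ω d (m+2) s *
      (∑ t ∈ levelSet ι (m+1), if t ⊆ s then g t else 0) ^ 2 = Diag + Off := by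
    rw [hDiagDef, hOffDef, ← Finset.sum_add_distrib]
    apply Finset.sum_congr rfl
    intro s _
    rw [hsplit s]
    ring
  -- Step 3: diagonal term
  have hDiag : Diag = ((m:ℝ)+2) * N1 := by
    rw [hDiagDef]
    have h1 : ∀ s ∈ levelSet ι (m+2), μlev Ω d (m+2) s *
        (∑ t ∈ levelSet ι (m+1), if t ⊆ s then g t * g t else 0)
        = ∑ t ∈ levelSet ι (m+1), (if t ⊆ s then μlev Ω d (m+2) s else 0) * (g t * g t) := by
      intro s _
      rw [Finset.mul_sum]
      apply Finset.sum_congr rfl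
      intro t _
      split <;> ring
    rw [Finset.sum_congr rfl h1, Finset.sum_comm, hN1, Finset.mul_sum]
    apply Finset.sum_congr rfl
    intro t ht
    rw [← Finset.sum_mul, sum_mu Ω d hΩ hcard (mem_levelSet.mp ht) (by omega) hmd]
    rw [Nat.choose_succ_self_right]
    push_cast
    ring
  -- Step 4: off-diagonal to link form
  have hOffC : Off = ∑ r ∈ levelSet ι m,
      (∑ u, ∑ v, (linkCount Ω r u v : ℝ) * g (insert u r) * g (insert v r)) /
        ((Ω.card : ℝ) * (d.choose (m+2) : ℝ)) := by
    rw [hOffDef]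
    -- push μ inside and move the s-sum innermost
    have h1 : ∀ s ∈ levelSet ι (m+2), μlev Ω d (m+2) s *
        (∑ t ∈ levelSet ι (m+1), ∑ t' ∈ levelSet ι (m+1),
          if t' ≠ t then (if t ⊆ s ∧ t' ⊆ s then g t * g t' else 0) else 0)
        = ∑ t ∈ levelSet ι (m+1), ∑ t' ∈ levelSet ι (m+1),
          (if t' ≠ t then (if t ⊆ s ∧ t' ⊆ s then μlev Ω d (m+2) s * (g t * g t') else 0) else 0) := by
      intro s _
      rw [Finset.mul_sum]
      apply Finset.sum_congr rfl
      intro t _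
      rw [Finset.mul_sum]
      apply Finset.sum_congr rfl
      intro t' _
      by_cases h : t' ≠ t
      · rw [if_pos h, if_pos h]
        split <;> ring
      · rw [if_neg h, if_neg h, mul_zero]
    rw [Finset.sum_congr rfl h1, Finset.sum_comm]
    have h2 : ∀ t ∈ levelSet ι (m+1), (∑ s ∈ levelSet ι (m+2), ∑ t' ∈ levelSet ι (m+1),
        if t' ≠ t then (if t ⊆ s ∧ t' ⊆ s then μlev Ω d (m+2) s * (g t * g t') else 0) else 0)
        = ∑ t' ∈ levelSet ι (m+1), ∑ s ∈ levelSet ι (m+2),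
          (if t' ≠ t then (if t ⊆ s ∧ t' ⊆ s then μlev Ω d (m+2) s * (g t * g t') else 0) else 0) :=
      fun t _ => Finset.sum_comm
    rw [Finset.sum_congr rfl h2]
    -- evaluate the s-sum for each pair (t,t') and insert the r-sum
    have h3 : ∀ t ∈ levelSet ι (m+1), ∀ t' ∈ levelSet ι (m+1),
        (∑ s ∈ levelSet ι (m+2),
          if t' ≠ t then (if t ⊆ s ∧ t' ⊆ s then μlev Ω d (m+2) s * (g t * g t') else 0) else 0)
        = ∑ r ∈ levelSet ι m, (if r ⊆ t then (if r ⊆ t' then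
            (if t' ≠ t then μlev Ω d (m+2) (t ∪ t') * (g t * g t') else 0) else 0) else 0) := by
      intro t ht t' ht'
      by_cases hne : t' ≠ t
      · have hct : t.card = m+1 := mem_levelSet.mp ht
        have hct' : t'.card = m+1 := mem_levelSet.mp ht'
        have hss : t ∩ t' ⊂ t' := by
          rw [Finset.ssubset_def]
          refine ⟨Finset.inter_subset_right, fun hc => hne ?_⟩
          have h4 : t' ⊆ t := fun x hx => (Finset.mem_inter.mp (hc hx)).1
          exact Finset.eq_of_subset_of_card_le h4 (by omega)
        have hint : (t ∩ t').card < m + 1 := hct' ▸ Finset.card_lt_card hss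
        have huni := Finset.card_union_add_card_inter t t'
        rw [hct, hct'] at huni
        have huni2 : m + 2 ≤ (t ∪ t').card := by omega
        have hiff : ((t ∪ t').card = m+2) ↔ ((t ∩ t').card = m) := by omega
        -- first: evaluate s-sum
        have e1 : (∑ s ∈ levelSet ι (m+2),
            if t' ≠ t then (if t ⊆ s ∧ t' ⊆ s then μlev Ω d (m+2) s * (g t * g t') else 0) else 0)
            = (∑ s ∈ levelSet ι (m+2), if t ∪ t' ⊆ s then μlev Ω d (m+2) s else 0) * (g t * g t') := by
          rw [Finset.sum_mul]
          apply Finset.sum_congr rfl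
          intro s _
          rw [if_pos hne]
          by_cases hsub : t ∪ t' ⊆ s
          · rw [if_pos hsub, if_pos (Finset.union_subset_iff.mp hsub)]
          · rw [if_neg hsub, if_neg (fun hc => hsub (Finset.union_subset hc.1 hc.2)), zero_mul]
        rw [e1, sum_superset_eq huni2]
        -- second: insert the r-sum
        have e2 : ∑ r ∈ levelSet ι m, (if r ⊆ t then (if r ⊆ t' then
            (if t' ≠ t then μlev Ω d (m+2) (t ∪ t') * (g t * g t') else 0) else 0) else 0)
            = ∑ r ∈ levelSet ι m, (if r ⊆ t ∩ t' then
              μlev Ω d (m+2) (t ∪ t') * (g t * g t') else 0) := by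
          apply Finset.sum_congr rfl
          intro r _
          by_cases hr1 : r ⊆ t
          · by_cases hr2 : r ⊆ t'
            · rw [if_pos hr1, if_pos hr2, if_pos hne, if_pos (Finset.subset_inter hr1 hr2)]
            · rw [if_pos hr1, if_neg hr2, if_neg (fun hc => hr2 (hc.trans Finset.inter_subset_right))]
          · rw [if_neg hr1, if_neg (fun hc => hr1 (hc.trans Finset.inter_subset_left))]
        rw [e2, sum_subset_eq (by omega)]
        by_cases hcond : (t ∪ t').card = m + 2
        · rw [if_pos hcond, if_pos (hiff.mp hcond)]
        · rw [if_neg hcond, if_neg (fun hc => hcond (hiff.mpr hc)), zero_mul]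
      · push_neg at hne
        subst hne
        rw [Finset.sum_eq_zero (fun s _ => by rw [if_neg (fun hc => hc rfl)])]
        symm
        apply Finset.sum_eq_zero
        intro r _
        by_cases hr1 : r ⊆ t'
        · rw [if_pos hr1, if_pos hr1, if_neg (fun hc => hc rfl)]
        · rw [if_neg hr1]
    rw [Finset.sum_congr rfl (fun t ht => Finset.sum_congr rfl (fun t' ht' => h3 t ht t' ht'))]
    -- move r-sum outside
    rw [Finset.sum_comm]
    have h5 : ∀ t' ∈ levelSet ι (m+1), (∑ t ∈ levelSet ι (m+1), ∑ r ∈ levelSet ι m,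
        (if r ⊆ t then (if r ⊆ t' then
          (if t' ≠ t then μlev Ω d (m+2) (t ∪ t') * (g t * g t') else 0) else 0) else 0))
        = ∑ r ∈ levelSet ι m, ∑ t ∈ levelSet ι (m+1),
          (if r ⊆ t then (if r ⊆ t' then
          (if t' ≠ t then μlev Ω d (m+2) (t ∪ t') * (g t * g t') else 0) else 0) else 0) :=
      fun t' _ => Finset.sum_comm
    rw [Finset.sum_congr rfl h5, Finset.sum_comm]
    -- now per r: reindex t and t' through vertices
    apply Finset.sum_congr rfl
    intro r hr
    have hrm : r.card = m := mem_levelSet.mp hr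
    -- swap inner two sums so that t is outer
    rw [Finset.sum_comm]
    -- reindex t
    have e3 : ∀ F : Finset ι → ℝ, (∑ t ∈ levelSet ι (m+1), if r ⊆ t then F t else 0)
        = ∑ u, (if u ∉ r then F (insert u r) else 0) := fun F => sum_insert_reindex hrm F
    have pull : ∀ t ∈ levelSet ι (m+1), (∑ t' ∈ levelSet ι (m+1),
        if r ⊆ t then (if r ⊆ t' then
          (if t' ≠ t then μlev Ω d (m+2) (t ∪ t') * (g t * g t') else 0) else 0) else 0)
        = (if r ⊆ t then (∑ t' ∈ levelSet ι (m+1), if r ⊆ t' then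
          (if t' ≠ t then μlev Ω d (m+2) (t ∪ t') * (g t * g t') else 0) else 0) else 0) := by
      intro t _
      by_cases h : r ⊆ t
      · simp only [if_pos h]
      · simp only [if_neg h, Finset.sum_const_zero]
    rw [Finset.sum_congr rfl pull]
    rw [e3 (fun t => ∑ t' ∈ levelSet ι (m+1),
      (if r ⊆ t' then (if t' ≠ t then μlev Ω d (m+2) (t ∪ t') * (g t * g t') else 0) else 0))]
    rw [Finset.sum_div]
    apply Finset.sum_congr rfl
    intro u _
    by_cases hu : u ∉ r
    · rw [if_pos hu]
      rw [e3 (fun t' => (if t' ≠ insert u r then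
        μlev Ω d (m+2) (insert u r ∪ t') * (g (insert u r) * g t') else 0))]
      rw [Finset.sum_div]
      apply Finset.sum_congr rfl
      intro v _
      by_cases hv : v ∉ r
      · rw [if_pos hv]
        by_cases huv : v = u
        · subst huv
          rw [if_neg (fun hc => hc rfl)]
          have : linkCount Ω r v v = 0 := by
            unfold linkCount
            rw [if_neg (fun hc => hc.1 rfl)]
          rw [this]
          simp
        · rw [if_pos (insert_ne_insert hu hv huv), insert_union_insert,
            linkCount_eq_nFaces Ω ⟨fun h => huv h.symm, hu, hv⟩]
          unfold μlev
          ring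
      · push_neg at hv
        have : linkCount Ω r u v = 0 := by
          unfold linkCount
          rw [if_neg (fun hc => hc.2.2 hv)]
        rw [if_neg (by simpa using hv), this]
        simp
    · push_neg at hu
      rw [if_neg (by simpa using hu)]
      symm
      rw [div_eq_zero_iff]
      left
      apply Finset.sum_eq_zero
      intro v _
      have : linkCount Ω r u v = 0 := by
        unfold linkCount
        rw [if_neg (fun hc => hc.2.1 hu)]
      rw [this]
      simp
  -- Step 5: bound the off-diagonal part
  have hOffle : Off ≤ ((m:ℝ)+1) * ((m:ℝ)+2) * D2 + γ * (((m:ℝ)+1) * ((m:ℝ)+2) * N1) := by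
    rw [hOffC]
    have hQle : ∀ r ∈ levelSet ι m,
        (∑ u, ∑ v, (linkCount Ω r u v : ℝ) * g (insert u r) * g (insert v r)) /
          ((Ω.card : ℝ) * (d.choose (m+2) : ℝ))
        ≤ ((m:ℝ)+1) * ((m:ℝ)+2) * (μlev Ω d m r * (dM Ω d (m+1) m g r) ^ 2)
          + γ * ((∑ u, (linkDeg Ω r u : ℝ) * g (insert u r) ^ 2) /
              ((Ω.card : ℝ) * (d.choose (m+2) : ℝ))) := by
      intro r hr
      have hrm := mem_levelSet.mp hr
      have hloc := local_bound Ω d hγ hexp r (by omega) (fun u => g (insert u r))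
      calc (∑ u, ∑ v, (linkCount Ω r u v : ℝ) * g (insert u r) * g (insert v r)) /
            ((Ω.card : ℝ) * (d.choose (m+2) : ℝ))
          ≤ ((∑ u, (linkDeg Ω r u : ℝ) * g (insert u r)) ^ 2 / (∑ u, (linkDeg Ω r u : ℝ))
              + γ * ∑ u, (linkDeg Ω r u : ℝ) * g (insert u r) ^ 2) /
            ((Ω.card : ℝ) * (d.choose (m+2) : ℝ)) := by
            apply div_le_div_of_nonneg_right ?_ (le_of_lt hwcpos)
            exact hloc
        _ = (∑ u, (linkDeg Ω r u : ℝ) * g (insert u r)) ^ 2 / (∑ u, (linkDeg Ω r u : ℝ))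
              / ((Ω.card : ℝ) * (d.choose (m+2) : ℝ))
            + γ * ((∑ u, (linkDeg Ω r u : ℝ) * g (insert u r) ^ 2) /
              ((Ω.card : ℝ) * (d.choose (m+2) : ℝ))) := by ring
        _ = ((m:ℝ)+1) * ((m:ℝ)+2) * (μlev Ω d m r * (dM Ω d (m+1) m g r) ^ 2)
            + γ * ((∑ u, (linkDeg Ω r u : ℝ) * g (insert u r) ^ 2) /
              ((Ω.card : ℝ) * (d.choose (m+2) : ℝ))) := by
            rw [Spart_eq Ω d hΩ hcard hmd hrm g]
    refine le_trans (Finset.sum_le_sum hQle) ?_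
    rw [Finset.sum_add_distrib]
    have h7 : ∑ r ∈ levelSet ι m,
        ((m:ℝ)+1) * ((m:ℝ)+2) * (μlev Ω d m r * (dM Ω d (m+1) m g r) ^ 2)
        = ((m:ℝ)+1) * ((m:ℝ)+2) * D2 := by
      rw [hD2, Finset.mul_sum]
    have h8 : ∑ r ∈ levelSet ι m, γ * ((∑ u, (linkDeg Ω r u : ℝ) * g (insert u r) ^ 2) /
          ((Ω.card : ℝ) * (d.choose (m+2) : ℝ)))
        = γ * ((∑ r ∈ levelSet ι m, ∑ u, (linkDeg Ω r u : ℝ) * g (insert u r) ^ 2) /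
          ((Ω.card : ℝ) * (d.choose (m+2) : ℝ))) := by
      rw [← Finset.mul_sum, ← Finset.sum_div]
    have h9 : (∑ r ∈ levelSet ι m, ∑ u, (linkDeg Ω r u : ℝ) * g (insert u r) ^ 2)
        = ((d - (m+1) : ℕ) : ℝ) * (((m:ℝ)+1) *
          (∑ t ∈ levelSet ι (m+1), (nFaces Ω t : ℝ) * g t ^ 2)) := by
      have h9a : ∀ r ∈ levelSet ι m, (∑ u, (linkDeg Ω r u : ℝ) * g (insert u r) ^ 2)
          = ((d - (m+1) : ℕ) : ℝ) *
            ∑ t ∈ levelSet ι (m+1), (if r ⊆ t then (nFaces Ω t : ℝ) * g t ^ 2 else 0) :=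
        fun r hr => link_sum_eq Ω d hcard (mem_levelSet.mp hr) (fun t => g t ^ 2)
      rw [Finset.sum_congr rfl h9a, ← Finset.mul_sum]
      congr 1
      rw [Finset.sum_comm, Finset.mul_sum]
      apply Finset.sum_congr rfl
      intro t ht
      rw [sum_count_subsets ((nFaces Ω t : ℝ) * g t ^ 2), mem_levelSet.mp ht,
        Nat.choose_succ_self_right]
      push_cast
      ring
    have h10 : ∑ t ∈ levelSet ι (m+1), (nFaces Ω t : ℝ) * g t ^ 2
        = ((Ω.card : ℝ) * (d.choose (m+1) : ℝ)) * N1 := by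
      rw [hN1, Finset.mul_sum]
      apply Finset.sum_congr rfl
      intro t _
      unfold μlev
      have hw1 : (Ω.card : ℝ) * (d.choose (m+1) : ℝ) ≠ 0 := ne_of_gt (wpos Ω d hΩ (by omega))
      field_simp
      rw [mul_div_assoc, div_self (by exact_mod_cast (Nat.choose_pos (show m + 1 ≤ d by omega)).ne'), mul_one]
    have hbpos : (0:ℝ) < (d.choose (m+1) : ℝ) := by
      exact_mod_cast Nat.choose_pos (show m + 1 ≤ d by omega)
    have he1 : (0:ℝ) < ((d - (m+1) : ℕ) : ℝ) := by
      have : 0 < d - (m+1) := by omega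
      exact_mod_cast this
    have h11 : ((d - (m+1) : ℕ) : ℝ) * (((m:ℝ)+1) * (((Ω.card : ℝ) * (d.choose (m+1) : ℝ)) * N1))
          / ((Ω.card : ℝ) * (d.choose (m+2) : ℝ))
        = ((m:ℝ)+1) * ((m:ℝ)+2) * N1 := by
      rw [choose_cast_c (d := d) hmd]
      have hm2 : ((m:ℝ)+2) ≠ 0 := by positivity
      field_simp
    rw [h7, h8, h9, h10, h11]
  -- Step 6: conclude
  rw [hLHS, hmain, hDiag]
  rw [div_le_iff₀ (by positivity)]
  have hexpand : ((1/((m:ℝ)+2) + ((m:ℝ)+1)/((m:ℝ)+2) * γ) * N1 + ((m:ℝ)+1)/((m:ℝ)+2) * D2)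
        * ((m:ℝ)+2)^2
      = ((m:ℝ)+2) * N1 + (((m:ℝ)+1) * ((m:ℝ)+2) * D2 + γ * (((m:ℝ)+1) * ((m:ℝ)+2) * N1)) := by
    field_simp
    ring
  rw [hexpand]
  linarith [hOffle]
end Aux7

section Aux8
variable {ι : Type} [Fintype ι] [DecidableEq ι] (Ω : Finset (Finset ι)) (d : ℕ)

lemma step_bound (hΩ : Ω.Nonempty) (hcard : ∀ D ∈ Ω, D.card = d) {γ : ℝ} (hγ : 0 ≤ γ)
    (hexp : ∀ I : Finset ι, (∃ D ∈ Ω, I ⊆ D) → I.card ≤ d - 2 →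
      ∀ f : ι → ℝ, (∑ u, (linkDeg Ω I u : ℝ) * f u) = 0 →
        (∑ u, ∑ v, (linkCount Ω I u v : ℝ) * f u * f v) ≤
          γ * ∑ u, (linkDeg Ω I u : ℝ) * (f u) ^ 2) :
    ∀ m : ℕ, m + 1 ≤ d → ∀ f : Finset ι → ℝ,
      (∑ s ∈ levelSet ι (m+1), μlev Ω d (m+1) s * f s) = 0 →
      ∑ r ∈ levelSet ι m, μlev Ω d m r * (dM Ω d (m+1) m f r) ^ 2
        ≤ ((m:ℝ)/((m:ℝ)+1) + (m:ℝ) * γ) *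
            ∑ s ∈ levelSet ι (m+1), μlev Ω d (m+1) s * f s ^ 2 := by
  intro m
  induction m with
  | zero =>
    intro hmd f hmean
    have hlv0 : levelSet ι 0 = {∅} := by
      ext s
      simp [mem_levelSet, Finset.card_eq_zero]
    rw [hlv0, Finset.sum_singleton]
    have hdM0 : dM Ω d 1 0 f ∅ = 0 := by
      unfold dM
      have h1 : (∑ s ∈ levelSet ι 1, if ∅ ⊆ s then μlev Ω d 1 s * f s else 0)
          = ∑ s ∈ levelSet ι 1, μlev Ω d 1 s * f s := by
        apply Finset.sum_congr rfl
        intro s _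
        rw [if_pos (Finset.empty_subset s)]
      rw [h1, hmean, zero_div]
    rw [hdM0]
    have hF : (0:ℝ) ≤ ∑ s ∈ levelSet ι 1, μlev Ω d 1 s * f s ^ 2 :=
      Finset.sum_nonneg fun s _ => mul_nonneg (μlev_nonneg Ω d 1 s) (sq_nonneg _)
    norm_num
  | succ m ih =>
    intro hmd f hmean
    have hm1d : m + 1 ≤ d := by omega
    have hmean_h : ∑ t ∈ levelSet ι (m+1), μlev Ω d (m+1) t * dM Ω d (m+2) (m+1) f t = 0 := by
      rw [sum_mu_dM Ω d hΩ hcard (Nat.le_succ _) hmd, hmean]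
    have hXeq : ∑ t ∈ levelSet ι (m+1), μlev Ω d (m+1) t * (dM Ω d (m+2) (m+1) f t) ^ 2
        = ∑ s ∈ levelSet ι (m+2), μlev Ω d (m+2) s * f s *
            aOp (m+1) (dM Ω d (m+2) (m+1) f) s := by
      rw [← adj_dM_aOp Ω d hΩ hmd f (dM Ω d (m+2) (m+1) f)]
      apply Finset.sum_congr rfl
      intro t _
      ring
    set X := ∑ t ∈ levelSet ι (m+1), μlev Ω d (m+1) t * (dM Ω d (m+2) (m+1) f t) ^ 2 with hX
    set F := ∑ s ∈ levelSet ι (m+2), μlev Ω d (m+2) s * f s ^ 2 with hF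
    set A := ∑ s ∈ levelSet ι (m+2), μlev Ω d (m+2) s *
        (aOp (m+1) (dM Ω d (m+2) (m+1) f) s) ^ 2 with hA
    have hXnn : 0 ≤ X :=
      Finset.sum_nonneg fun t _ => mul_nonneg (μlev_nonneg Ω d (m+1) t) (sq_nonneg _)
    have hFnn : 0 ≤ F :=
      Finset.sum_nonneg fun s _ => mul_nonneg (μlev_nonneg Ω d (m+2) s) (sq_nonneg _)
    have hAnn : 0 ≤ A :=
      Finset.sum_nonneg fun s _ => mul_nonneg (μlev_nonneg Ω d (m+2) s) (sq_nonneg _)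
    -- Cauchy-Schwarz
    have hcs : X ≤ Real.sqrt F * Real.sqrt A := by
      rw [hXeq]
      exact le_trans (le_abs_self _)
        (abs_weighted_cs (levelSet ι (m+2)) (μlev Ω d (m+2)) f
          (aOp (m+1) (dM Ω d (m+2) (m+1) f))
          (fun s _ => μlev_nonneg Ω d (m+2) s))
    -- bound on A
    have hrec := rec_bound Ω d hΩ hcard hγ hexp m hmd (dM Ω d (m+2) (m+1) f)
    have hih := ih hm1d (dM Ω d (m+2) (m+1) f) hmean_h
    set β : ℝ := ((m:ℝ)+1)/((m:ℝ)+2) + ((m:ℝ)+1)*γ with hβ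
    have hβnn : 0 ≤ β := by rw [hβ]; positivity
    have hcoef : (1/((m:ℝ)+2) + ((m:ℝ)+1)/((m:ℝ)+2) * γ)
        + ((m:ℝ)+1)/((m:ℝ)+2) * ((m:ℝ)/((m:ℝ)+1) + (m:ℝ)*γ) ≤ β := by
      rw [hβ]
      have hm1 : (0:ℝ) < (m:ℝ)+1 := by positivity
      have hm2 : (0:ℝ) < (m:ℝ)+2 := by positivity
      have e1 : (1/((m:ℝ)+2) + ((m:ℝ)+1)/((m:ℝ)+2) * γ)
          + ((m:ℝ)+1)/((m:ℝ)+2) * ((m:ℝ)/((m:ℝ)+1) + (m:ℝ)*γ)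
          = ((m:ℝ)+1)/((m:ℝ)+2) + (((m:ℝ)+1)^2/((m:ℝ)+2))*γ := by
        field_simp
        ring
      rw [e1]
      have e2 : (((m:ℝ)+1)^2/((m:ℝ)+2)) ≤ (m:ℝ)+1 := by
        rw [div_le_iff₀ hm2]
        nlinarith
      nlinarith [mul_le_mul_of_nonneg_right e2 hγ]
    have hAβ : A ≤ β * X := by
      have h1 : ((m:ℝ)+1)/((m:ℝ)+2) *
          (∑ r ∈ levelSet ι m, μlev Ω d m r * (dM Ω d (m+1) m (dM Ω d (m+2) (m+1) f) r) ^ 2)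
          ≤ ((m:ℝ)+1)/((m:ℝ)+2) * (((m:ℝ)/((m:ℝ)+1) + (m:ℝ)*γ) * X) :=
        mul_le_mul_of_nonneg_left hih (by positivity)
      have h2 := mul_le_mul_of_nonneg_right hcoef hXnn
      calc A ≤ (1/((m:ℝ)+2) + ((m:ℝ)+1)/((m:ℝ)+2) * γ) * X + ((m:ℝ)+1)/((m:ℝ)+2) *
            (∑ r ∈ levelSet ι m, μlev Ω d m r * (dM Ω d (m+1) m (dM Ω d (m+2) (m+1) f) r) ^ 2) :=
            hrec
        _ ≤ (1/((m:ℝ)+2) + ((m:ℝ)+1)/((m:ℝ)+2) * γ) * X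
              + ((m:ℝ)+1)/((m:ℝ)+2) * (((m:ℝ)/((m:ℝ)+1) + (m:ℝ)*γ) * X) := by linarith [h1]
        _ = ((1/((m:ℝ)+2) + ((m:ℝ)+1)/((m:ℝ)+2) * γ)
              + ((m:ℝ)+1)/((m:ℝ)+2) * ((m:ℝ)/((m:ℝ)+1) + (m:ℝ)*γ)) * X := by ring
        _ ≤ β * X := h2
    -- conclude
    have hXβF : X ≤ β * F := by
      have hsqrtA : Real.sqrt A ≤ Real.sqrt (β * X) := Real.sqrt_le_sqrt hAβ
      have hXle : X ≤ Real.sqrt F * Real.sqrt (β * X) :=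
        le_trans hcs (mul_le_mul_of_nonneg_left hsqrtA (Real.sqrt_nonneg F))
      have hsq : X * X ≤ F * (β * X) := by
        have h0 : 0 ≤ Real.sqrt F * Real.sqrt (β * X) := by positivity
        have h1 := mul_self_le_mul_self hXnn hXle
        calc X * X ≤ (Real.sqrt F * Real.sqrt (β * X)) * (Real.sqrt F * Real.sqrt (β * X)) := h1
          _ = (Real.sqrt F * Real.sqrt F) * (Real.sqrt (β * X) * Real.sqrt (β * X)) := by ring
          _ = F * (β * X) := by
              rw [Real.mul_self_sqrt hFnn, Real.mul_self_sqrt (by positivity)]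
      rcases eq_or_lt_of_le hXnn with hX0 | hX0
      · rw [← hX0]
        exact mul_nonneg hβnn hFnn
      · have h2 : X * X ≤ (β * F) * X :=
          le_trans hsq (le_of_eq (by ring))
        exact le_of_mul_le_mul_right h2 hX0
    -- match the goal
    have hgoal : ((((m+1):ℕ):ℝ)/((((m+1):ℕ):ℝ)+1) + (((m+1):ℕ):ℝ)*γ) = β := by
      rw [hβ]
      push_cast
      ring_nf
    rw [hgoal]
    exact hXβF
end Aux8

section Aux9
variable {ι : Type} [Fintype ι] [DecidableEq ι] (Ω : Finset (Finset ι)) (d : ℕ)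

lemma combine_bound {X Y F a1 b1 c1 c2 τ1 τ2 γ : ℝ} (hγ : 0 ≤ γ)
    (hXY : X ≤ Y) (hXa : X ≤ (a1 + b1*γ) * Y) (hY : Y ≤ (c1 + c2*γ) * F)
    (hFnn : 0 ≤ F)
    (ha1 : 0 ≤ a1) (hb1 : 0 ≤ b1) (hc1 : 0 ≤ c1) (hc11 : c1 ≤ 1) (hc2 : 0 ≤ c2)
    (hτ1 : a1 * c1 = τ1) (hτ2 : b1 + c2 ≤ τ2) :
    X ≤ (τ1 + τ2*γ) * F := by
  have hM0 : 0 ≤ min 1 (a1 + b1*γ) := le_min (by norm_num) (by positivity)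
  have hM1 : min 1 (a1 + b1*γ) ≤ 1 := min_le_left _ _
  have hMa : min 1 (a1 + b1*γ) ≤ a1 + b1*γ := min_le_right _ _
  have hXM : X ≤ min 1 (a1 + b1*γ) * Y := by
    rcases min_cases (1:ℝ) (a1 + b1*γ) with ⟨hM, _⟩ | ⟨hM, _⟩ <;> rw [hM]
    · rw [one_mul]; exact hXY
    · exact hXa
  have h2 : min 1 (a1 + b1*γ) * Y ≤ min 1 (a1 + b1*γ) * ((c1 + c2*γ) * F) :=
    mul_le_mul_of_nonneg_left hY hM0
  have hMc : min 1 (a1 + b1*γ) * (c1 + c2*γ) ≤ τ1 + τ2*γ := by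
    have e2 : min 1 (a1 + b1*γ) * c1 ≤ (a1 + b1*γ) * c1 := mul_le_mul_of_nonneg_right hMa hc1
    have e4 : b1*c1*γ ≤ b1*γ := by nlinarith [mul_le_mul_of_nonneg_left hc11 (mul_nonneg hb1 hγ)]
    have e5 : min 1 (a1 + b1*γ) * (c2*γ) ≤ c2*γ := by nlinarith [mul_nonneg hc2 hγ]
    nlinarith [mul_le_mul_of_nonneg_right hτ2 hγ]
  calc X ≤ min 1 (a1 + b1*γ) * Y := hXM
    _ ≤ min 1 (a1 + b1*γ) * ((c1 + c2*γ) * F) := h2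
    _ = (min 1 (a1 + b1*γ) * (c1 + c2*γ)) * F := by ring
    _ ≤ (τ1 + τ2*γ) * F := mul_le_mul_of_nonneg_right hMc hFnn

lemma multi_bound (hΩ : Ω.Nonempty) (hcard : ∀ D ∈ Ω, D.card = d) {γ : ℝ} (hγ : 0 ≤ γ)
    (hexp : ∀ I : Finset ι, (∃ D ∈ Ω, I ⊆ D) → I.card ≤ d - 2 →
      ∀ f : ι → ℝ, (∑ u, (linkDeg Ω I u : ℝ) * f u) = 0 →
        (∑ u, ∑ v, (linkCount Ω I u v : ℝ) * f u * f v) ≤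
          γ * ∑ u, (linkDeg Ω I u : ℝ) * (f u) ^ 2) :
    ∀ p k : ℕ, 1 ≤ k → k + p ≤ d → ∀ f : Finset ι → ℝ,
      (∑ s ∈ levelSet ι (k+p), μlev Ω d (k+p) s * f s) = 0 →
      ∑ r ∈ levelSet ι k, μlev Ω d k r * (dM Ω d (k+p) k f r) ^ 2
        ≤ ((k:ℝ)/((k:ℝ)+(p:ℝ)) + (p:ℝ)*((k:ℝ)+(p:ℝ))*γ) *
            ∑ s ∈ levelSet ι (k+p), μlev Ω d (k+p) s * f s ^ 2 := by
  intro p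
  induction p with
  | zero =>
    intro k hk hkd f _
    simp only [Nat.add_zero] at *
    have hkpos : (0:ℝ) < (k:ℝ) := by exact_mod_cast hk
    have hsame : ∀ r ∈ levelSet ι k, μlev Ω d k r * (dM Ω d k k f r) ^ 2
        = μlev Ω d k r * f r ^ 2 := by
      intro r hr
      by_cases hz : nFaces Ω r = 0
      · rw [dM_zero Ω d hΩ hkd hz, (μlev_eq_zero_iff Ω d hΩ hkd r).mpr hz]
        ring
      · have hμ : 0 < μlev Ω d k r := by
          rcases lt_or_eq_of_le (μlev_nonneg Ω d k r) with h1 | h1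
          · exact h1
          · exact absurd ((μlev_eq_zero_iff Ω d hΩ hkd r).mp h1.symm) hz
        have hdm : dM Ω d k k f r = f r := by
          unfold dM
          rw [show (∑ s ∈ levelSet ι k, if r ⊆ s then μlev Ω d k s * f s else 0)
              = μlev Ω d k r * f r from ?_]
          · rw [Nat.choose_self]
            push_cast
            rw [one_mul]
            field_simp
          · have := sum_superset_eq (w := r) (p := k) (le_of_eq (mem_levelSet.mp hr).symm)
              (fun s => μlev Ω d k s * f s)
            rw [this, if_pos (mem_levelSet.mp hr)]
        rw [hdm]
    rw [Finset.sum_congr rfl hsame]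
    have hcoe : ((k:ℝ)/((k:ℝ)+((0:ℕ):ℝ)) + ((0:ℕ):ℝ)*((k:ℝ)+((0:ℕ):ℝ))*γ) = 1 := by
      push_cast
      rw [add_zero, div_self (ne_of_gt hkpos)]
      ring
    rw [hcoe, one_mul]
  | succ p ih =>
    intro k hk hkd f hmean
    have hk1d : k + 1 ≤ d := by omega
    have hk1i : k + 1 ≤ k + (p + 1) := by omega
    have hE : k + 1 + p = k + (p + 1) := by omega
    -- rewrite via composition
    have hstep : ∀ r ∈ levelSet ι k,
        μlev Ω d k r * (dM Ω d (k+(p+1)) k f r) ^ 2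
        = μlev Ω d k r * (dM Ω d (k+1) k (dM Ω d (k+(p+1)) (k+1) f) r) ^ 2 := by
      intro r hr
      rw [dM_comp Ω d hΩ hcard hk1i hkd f r hr]
    rw [Finset.sum_congr rfl hstep]
    -- mean zero of the partial image
    have hmean1 : ∑ t ∈ levelSet ι (k+1), μlev Ω d (k+1) t * dM Ω d (k+(p+1)) (k+1) f t = 0 := by
      rw [sum_mu_dM Ω d hΩ hcard hk1i hkd f, hmean]
    -- one step bound
    have hXa := step_bound Ω d hΩ hcard hγ hexp k hk1d (dM Ω d (k+(p+1)) (k+1) f) hmean1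
    -- contraction
    have hXY := dM_contract Ω d hΩ hcard (Nat.le_succ k) hk1d (dM Ω d (k+(p+1)) (k+1) f)
    -- induction hypothesis at level k+1
    have hih := ih (k+1) (by omega) (by omega : k + 1 + p ≤ d) f (by rw [hE]; exact hmean)
    rw [hE] at hih
    push_cast at hih ⊢
    -- positivity facts
    have hkpos : (0:ℝ) < (k:ℝ) := by exact_mod_cast hk
    have hppos : (0:ℝ) ≤ (p:ℝ) := by positivity
    have hFnn : 0 ≤ ∑ s ∈ levelSet ι (k+(p+1)), μlev Ω d (k+(p+1)) s * f s ^ 2 :=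
      Finset.sum_nonneg fun s _ => mul_nonneg (μlev_nonneg Ω d _ s) (sq_nonneg _)
    refine combine_bound hγ hXY hXa hih hFnn ?_ ?_ ?_ ?_ ?_ ?_ ?_
    · positivity
    · positivity
    · positivity
    · rw [div_le_one (by positivity)]
      linarith
    · positivity
    · rw [div_mul_div_comm]
      rw [div_eq_div_iff (by positivity) (by positivity)]
      ring
    · nlinarith [hkpos, hppos]
end Aux9

section Aux10
variable {ι : Type} [Fintype ι] [DecidableEq ι] (Ω : Finset (Finset ι)) (d : ℕ)

lemma downUp_eq (hΩ : Ω.Nonempty) (hcard : ∀ D ∈ Ω, D.card = d) {i k : ℕ}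
    (hki : k ≤ i) (hid : i ≤ d) (f g : Finset ι → ℝ) :
    ∑ s ∈ levelSet ι i, ∑ t ∈ levelSet ι i, downUp Ω d i k s t * f s * g t
      = ∑ r ∈ levelSet ι k, μlev Ω d k r * dM Ω d i k f r * dM Ω d i k g r := by
  have hc : (0:ℝ) < (i.choose k : ℝ) := by exact_mod_cast Nat.choose_pos hki
  have h1 : ∀ s ∈ levelSet ι i, ∀ t ∈ levelSet ι i, downUp Ω d i k s t * f s * g t
      = ∑ r ∈ levelSet ι k, (if r ⊆ s ∧ r ⊆ t then
          μlev Ω d i s * μlev Ω d i t /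
            ((i.choose k : ℝ) * ((i.choose k : ℝ) * μlev Ω d k r)) * f s * g t else 0) := by
    intro s _ t _
    unfold downUp
    rw [show (Finset.univ.filter (fun r : Finset ι => r.card = k ∧ r ⊆ s ∧ r ⊆ t))
        = (levelSet ι k).filter (fun r => r ⊆ s ∧ r ⊆ t) by
      unfold levelSet
      rw [Finset.filter_filter]]
    rw [Finset.sum_filter, Finset.sum_mul, Finset.sum_mul]
    apply Finset.sum_congr rfl
    intro r hr
    by_cases h : r ⊆ s ∧ r ⊆ t
    · rw [if_pos h, if_pos h, sum_mu Ω d hΩ hcard (mem_levelSet.mp hr) hki hid]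
    · rw [if_neg h, if_neg h, zero_mul, zero_mul]
  rw [Finset.sum_congr rfl (fun s hs => Finset.sum_congr rfl (fun t ht => h1 s hs t ht))]
  rw [Finset.sum_congr rfl (fun s _ => Finset.sum_comm), Finset.sum_comm]
  apply Finset.sum_congr rfl
  intro r hr
  by_cases hz : nFaces Ω r = 0
  · rw [dM_zero Ω d hΩ hid hz f, dM_zero Ω d hΩ hid hz g]
    rw [mul_zero]
    apply Finset.sum_eq_zero
    intro s _
    apply Finset.sum_eq_zero
    intro t _
    split
    · rename_i h
      rw [(μlev_eq_zero_iff Ω d hΩ hid s).mpr (nFaces_eq_zero Ω h.1 hz)]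
      ring
    · rfl
  · have hμ : 0 < μlev Ω d k r := by
      rcases lt_or_eq_of_le (μlev_nonneg Ω d k r) with h1' | h1'
      · exact h1'
      · exact absurd ((μlev_eq_zero_iff Ω d hΩ (hki.trans hid) r).mp h1'.symm) hz
    have hfac : ∀ s ∈ levelSet ι i, (∑ t ∈ levelSet ι i, if r ⊆ s ∧ r ⊆ t then
        μlev Ω d i s * μlev Ω d i t /
          ((i.choose k : ℝ) * ((i.choose k : ℝ) * μlev Ω d k r)) * f s * g t else 0)
        = (if r ⊆ s then μlev Ω d i s * f s else 0) *
          (∑ t ∈ levelSet ι i, if r ⊆ t then μlev Ω d i t * g t else 0) /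
            ((i.choose k : ℝ) * ((i.choose k : ℝ) * μlev Ω d k r)) := by
      intro s _
      by_cases hrs : r ⊆ s
      · rw [if_pos hrs, Finset.mul_sum, Finset.sum_div]
        apply Finset.sum_congr rfl
        intro t _
        by_cases hrt : r ⊆ t
        · rw [if_pos ⟨hrs, hrt⟩, if_pos hrt]
          ring
        · rw [if_neg (fun hcc => hrt hcc.2), if_neg hrt]
          simp
      · rw [if_neg hrs, zero_mul, zero_div]
        apply Finset.sum_eq_zero
        intro t _
        rw [if_neg (fun hcc => hrs hcc.1)]
    rw [Finset.sum_congr rfl hfac, ← Finset.sum_div, ← Finset.sum_mul]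
    unfold dM
    field_simp
end Aux10


/-- There is `C > 0` such that: if `X` is a `d`-dimensional
simplicial complex (top faces `Ω`, all of size `d`) which is a `γ` one-sided local
spectral expander (every link of a face of size at most `d − 2` has 1-skeleton
with second eigenvalue at most `γ`, stated via the quadratic form on mean-zero
functions), then for all `i ≤ d` and `1 < k < i` (i.e. `α = k/i ∈ (1/i, 1)`), the
down-up random walk on `X(i)` through uniformly random `k`-subsets has second
largest singular value at most `k/i + poly(i)·γ`. -/
theorem stmt16 : ∃ C : ℝ, 0 < C ∧
    ∀ (ι : Type) [Fintype ι] [DecidableEq ι] (d : ℕ) (Ω : Finset (Finset ι)),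
      Ω.Nonempty → (∀ D ∈ Ω, D.card = d) →
      ∀ γ : ℝ, 0 ≤ γ →
      (∀ I : Finset ι, (∃ D ∈ Ω, I ⊆ D) → I.card ≤ d - 2 →
        ∀ f : ι → ℝ, (∑ u, (linkDeg Ω I u : ℝ) * f u) = 0 →
          (∑ u, ∑ v, (linkCount Ω I u v : ℝ) * f u * f v) ≤
            γ * ∑ u, (linkDeg Ω I u : ℝ) * (f u) ^ 2) →
      ∀ i k : ℕ, 1 < k → k < i → i ≤ d →
      ∀ f g : Finset ι → ℝ,
        (∑ s ∈ levelSet ι i, μlev Ω d i s * f s) = 0 →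
        (∑ s ∈ levelSet ι i, μlev Ω d i s * g s) = 0 →
        |∑ s ∈ levelSet ι i, ∑ t ∈ levelSet ι i, downUp Ω d i k s t * f s * g t| ≤
          ((k : ℝ) / (i : ℝ) + (i : ℝ) ^ C * γ) *
            Real.sqrt (∑ s ∈ levelSet ι i, μlev Ω d i s * (f s) ^ 2) *
            Real.sqrt (∑ s ∈ levelSet ι i, μlev Ω d i s * (g s) ^ 2) := by
  refine ⟨2, by norm_num, ?_⟩
  intro ι _ _ d Ω hΩ hcard γ hγ hexp i k hk1 hki hid f g hmf hmg
  have hk : 1 ≤ k := by omega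
  have hkle : k ≤ i := le_of_lt hki
  have hE : k + (i - k) = i := by omega
  have hcast : (k:ℝ) + ((i - k : ℕ):ℝ) = (i:ℝ) := by exact_mod_cast congrArg (Nat.cast : ℕ → ℝ) hE
  have hipos : (0:ℝ) < (i:ℝ) := by
    have : 0 < i := by omega
    exact_mod_cast this
  -- the kernel identity
  rw [downUp_eq Ω d hΩ hcard hkle hid f g]
  -- Cauchy–Schwarz
  have hcs := abs_weighted_cs (levelSet ι k) (μlev Ω d k) (dM Ω d i k f) (dM Ω d i k g)
    (fun r _ => μlev_nonneg Ω d k r)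
  -- the two norm bounds
  have hmulf := multi_bound Ω d hΩ hcard hγ hexp (i - k) k hk (by omega) f
    (by rw [hE]; exact hmf)
  have hmulg := multi_bound Ω d hΩ hcard hγ hexp (i - k) k hk (by omega) g
    (by rw [hE]; exact hmg)
  rw [hE, hcast] at hmulf hmulg
  set lam : ℝ := (k:ℝ)/(i:ℝ) + ((i - k : ℕ):ℝ)*(i:ℝ)*γ with hlam
  have hlamnn : 0 ≤ lam := by
    rw [hlam]
    have h1 : (0:ℝ) ≤ (k:ℝ)/(i:ℝ) := by positivity
    have h2 : (0:ℝ) ≤ ((i - k : ℕ):ℝ)*(i:ℝ)*γ :=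
      mul_nonneg (by positivity) hγ
    linarith
  set F := ∑ s ∈ levelSet ι i, μlev Ω d i s * (f s) ^ 2 with hF
  set G := ∑ s ∈ levelSet ι i, μlev Ω d i s * (g s) ^ 2 with hG
  have hFnn : 0 ≤ F :=
    Finset.sum_nonneg fun s _ => mul_nonneg (μlev_nonneg Ω d i s) (sq_nonneg _)
  have hGnn : 0 ≤ G :=
    Finset.sum_nonneg fun s _ => mul_nonneg (μlev_nonneg Ω d i s) (sq_nonneg _)
  have hlamle : lam ≤ (k:ℝ)/(i:ℝ) + (i:ℝ)^(2:ℝ)*γ := by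
    rw [hlam, show ((2:ℝ)) = ((2:ℕ):ℝ) by norm_num, Real.rpow_natCast]
    have hpi : ((i - k : ℕ):ℝ) ≤ (i:ℝ) := by
      have : i - k ≤ i := by omega
      exact_mod_cast this
    have h3 : ((i - k : ℕ):ℝ)*(i:ℝ)*γ ≤ ((i:ℝ)*(i:ℝ))*γ :=
      mul_le_mul_of_nonneg_right
        (mul_le_mul_of_nonneg_right hpi (le_of_lt hipos)) hγ
    nlinarith [h3]
  calc |∑ r ∈ levelSet ι k, μlev Ω d k r * dM Ω d i k f r * dM Ω d i k g r|
      ≤ Real.sqrt (∑ r ∈ levelSet ι k, μlev Ω d k r * (dM Ω d i k f r) ^ 2) *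
        Real.sqrt (∑ r ∈ levelSet ι k, μlev Ω d k r * (dM Ω d i k g r) ^ 2) := hcs
    _ ≤ Real.sqrt (lam * F) * Real.sqrt (lam * G) := by
        apply mul_le_mul (Real.sqrt_le_sqrt hmulf) (Real.sqrt_le_sqrt hmulg)
          (Real.sqrt_nonneg _) (Real.sqrt_nonneg _)
    _ = lam * Real.sqrt F * Real.sqrt G := by
        rw [Real.sqrt_mul hlamnn, Real.sqrt_mul hlamnn]
        rw [show Real.sqrt lam * Real.sqrt F * (Real.sqrt lam * Real.sqrt G)
            = (Real.sqrt lam * Real.sqrt lam) * (Real.sqrt F * Real.sqrt G) by ring]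
        rw [Real.mul_self_sqrt hlamnn]
        ring
    _ ≤ ((k : ℝ) / (i : ℝ) + (i : ℝ) ^ (2:ℝ) * γ) * Real.sqrt F * Real.sqrt G := by
        apply mul_le_mul_of_nonneg_right
          (mul_le_mul_of_nonneg_right hlamle (Real.sqrt_nonneg F)) (Real.sqrt_nonneg G)
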